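/- arXiv:1201.2545 — 6 statements merged into one kernel-verified Lean document; each statement's English description precedes it below -/
import Mathlib

section
/- Let N(t) = sup{n ≥ 0 : S_n ≤ t} be a general counting process with interarrival times X_1, X_2, … and arrival times S_n = X_1 + ⋯ + X_n (S_0 = 0), and let T be a nonnegative random time independent of the process (i.e., independent of the sequence (X_1, X_2, …)). Assume: (a) T is DFR; (b) P(T = 0)·P(X_1 = 0) = 0 (T and X_1 do not both have positive mass at 0). If E[F̄_T(X_1)]² ≤ E[F̄_T(S_2)] and E[F̄_T(S_{n+1})]² ≤ E[F̄_T(S_n)]·E[F̄_T(S_{n+2})] for all n = 1, 2, …, then N(T) is d-DFR. -/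
open MeasureTheory ProbabilityTheory

variable {Ω : Type*} [MeasurableSpace Ω]

/-- Survival function of a random variable `T`: `F̄_T(t) = P(T > t)`. -/
noncomputable def surv (μ : Measure Ω) (T : Ω → ℝ) (t : ℝ) : ℝ :=
  (μ {ω | t < T ω}).toReal

/-- `T` has the decreasing failure rate (DFR) property:
`F̄_T(s+z)·F̄_T(t) ≤ F̄_T(t+z)·F̄_T(s)` for all `0 ≤ s ≤ t` and `z ≥ 0`
(log-convexity of the survival function on `[0,∞)`). -/
def IsDFR (μ : Measure Ω) (T : Ω → ℝ) : Prop :=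
  ∀ s t z : ℝ, 0 ≤ s → s ≤ t → 0 ≤ z →
    μ {ω | s + z < T ω} * μ {ω | t < T ω} ≤ μ {ω | t + z < T ω} * μ {ω | s < T ω}

/-- Arrival times: `S n = X 1 + ⋯ + X n` (with 0-based indexing of the
interarrival times, `X i` is the `(i+1)`-st interarrival time), `S 0 = 0`. -/
noncomputable def arr (X : ℕ → Ω → ℝ) (n : ℕ) (ω : Ω) : ℝ :=
  ∑ i ∈ Finset.range n, X i ω

/-- The counting process `N(t) = sup {n ≥ 0 : S n ≤ t}` (valued in `ℕ∞`,
allowing infinitely many arrivals). -/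
noncomputable def countN (X : ℕ → Ω → ℝ) (t : ℝ) (ω : Ω) : ℕ∞ :=
  sSup ((fun n : ℕ => (n : ℕ∞)) '' {n : ℕ | arr X n ω ≤ t})

/-- A (possibly defective) `ℕ∞`-valued random variable `M` is discrete DFR:
`P(M ≥ n+1)² ≤ P(M ≥ n)·P(M ≥ n+2)` for all `n`. -/
def IsdDFR (μ : Measure Ω) (M : Ω → ℕ∞) : Prop :=
  ∀ n : ℕ,
    μ {ω | (n : ℕ∞) + 1 ≤ M ω} ^ 2 ≤
      μ {ω | (n : ℕ∞) ≤ M ω} * μ {ω | (n : ℕ∞) + 2 ≤ M ω}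


lemma arr_mono (X : ℕ → Ω → ℝ) (hX : ∀ n ω, 0 ≤ X n ω) (ω : Ω) :
    Monotone fun n => arr X n ω := fun m n hmn =>
  Finset.sum_le_sum_of_subset_of_nonneg (Finset.range_subset_range.mpr hmn)
    (fun i _ _ => hX i ω)

lemma arr_nonneg (X : ℕ → Ω → ℝ) (hX : ∀ n ω, 0 ≤ X n ω) (n : ℕ) (ω : Ω) :
    0 ≤ arr X n ω :=
  Finset.sum_nonneg fun i _ => hX i ω

lemma arr_pos (X : ℕ → Ω → ℝ) (hX : ∀ n ω, 0 ≤ X n ω) {n : ℕ} (hn : 1 ≤ n) {ω : Ω}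
    (h0 : 0 < X 0 ω) : 0 < arr X n ω := by
  have h1 : arr X 1 ω = X 0 ω := by simp [arr]
  calc (0:ℝ) < X 0 ω := h0
    _ = arr X 1 ω := h1.symm
    _ ≤ arr X n ω := arr_mono X hX ω hn

lemma countN_ge_iff (X : ℕ → Ω → ℝ) (hX : ∀ n ω, 0 ≤ X n ω) (n : ℕ) (t : ℝ)
    (ht : 0 ≤ t) (ω : Ω) :
    (n : ℕ∞) ≤ countN X t ω ↔ arr X n ω ≤ t := by
  constructor
  · intro h
    by_contra hna
    push_neg at hna
    have hn0 : n ≠ 0 := by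
      rintro rfl
      simp [arr] at hna
      linarith
    have hub : countN X t ω ≤ ((n - 1 : ℕ) : ℕ∞) := by
      apply sSup_le
      rintro x ⟨m, hm, rfl⟩
      have hmn : m < n := by
        by_contra hge
        push_neg at hge
        exact absurd (le_trans (arr_mono X hX ω hge) hm) (not_le.mpr hna)
      show ((m:ℕ∞)) ≤ ((n-1:ℕ):ℕ∞)
      exact_mod_cast Nat.le_pred_of_lt hmn
    have := le_trans h hub
    have hnn : n ≤ n - 1 := by exact_mod_cast this
    omega
  · intro h
    exact le_sSup ⟨n, h, rfl⟩

lemma no_pos_atom (μ : Measure Ω) [IsProbabilityMeasure μ] (T : Ω → ℝ)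
    (ha : IsDFR μ T) {b : ℝ} (hb : 0 < b) :
    μ {ω | b ≤ T ω} = μ {ω | b < T ω} := by
  refine le_antisymm ?_ (measure_mono fun ω (h : b < T ω) => le_of_lt h)
  set F : ℝ → ℝ := fun t => (μ {ω | t < T ω}).toReal with hF
  have hFanti : ∀ ⦃s t : ℝ⦄, s ≤ t → F t ≤ F s := fun s t hst =>
    (ENNReal.toReal_le_toReal (measure_ne_top μ _) (measure_ne_top μ _)).mpr
      (measure_mono fun ω h => lt_of_le_of_lt hst h)
  have hF1 : ∀ t, F t ≤ 1 := fun t => by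
    have h1 : μ {ω | t < T ω} ≤ 1 := prob_le_one
    simpa [hF] using ENNReal.toReal_le_of_le_ofReal zero_le_one (by simpa using h1)
  have hF0 : ∀ t, 0 ≤ F t := fun t => ENNReal.toReal_nonneg
  set L : ℝ := (μ {ω | b ≤ T ω}).toReal with hL
  have hLF : ∀ δ : ℝ, 0 < δ → L ≤ F (b - δ) := fun δ hδ =>
    (ENNReal.toReal_le_toReal (measure_ne_top μ _) (measure_ne_top μ _)).mpr
      (measure_mono fun ω (h : b ≤ T ω) => show b - δ < T ω by linarith)
  have hdfr : ∀ s t z : ℝ, 0 ≤ s → s ≤ t → 0 ≤ z →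
      F (s + z) * F t ≤ F (t + z) * F s := by
    intro s t z hs hst hz
    have h := ha s t z hs hst hz
    have := (ENNReal.toReal_le_toReal (by finiteness) (by finiteness)).mpr h
    simpa [ENNReal.toReal_mul] using this
  suffices hgoal : L ≤ F b by
    exact (ENNReal.toReal_le_toReal (measure_ne_top μ _) (measure_ne_top μ _)).mp hgoal
  by_contra hc
  push_neg at hc
  have hL0 : 0 < L := lt_of_le_of_lt (hF0 b) hc
  set r : ℝ := F b / L with hrdef
  have hr0 : 0 ≤ r := div_nonneg (hF0 b) hL0.le
  have hr1 : r < 1 := (div_lt_one hL0).mpr hc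
  obtain ⟨k0, hk0⟩ := exists_pow_lt_of_lt_one hL0 hr1
  set k : ℕ := k0 + 1 with hkdef
  have hk : r ^ k < L :=
    lt_of_le_of_lt (pow_le_pow_of_le_one hr0 hr1.le (Nat.le_succ k0)) hk0
  have hk1 : (1:ℝ) ≤ (k:ℝ) := by exact_mod_cast Nat.one_le_iff_ne_zero.mpr (by omega)
  have hkpos : (0:ℝ) < (k:ℝ) := by linarith
  set e : ℝ := b / (2 * k) with hedef
  have he0 : 0 < e := by positivity
  have hkh : (k:ℝ) * e = b / 2 := by rw [hedef]; field_simp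
  have step : ∀ s : ℝ, 0 ≤ s → s ≤ b - e / 2 → F (s + e) ≤ r * F s := by
    intro s hs hsb
    have hz : 0 ≤ b - e / 2 - s := by linarith
    have hstep := hdfr s (s + e) (b - e / 2 - s) hs (by linarith) hz
    have h1 : s + (b - e / 2 - s) = b - e / 2 := by ring
    have h2 : s + e + (b - e / 2 - s) = b + e / 2 := by ring
    rw [h1, h2] at hstep
    have hA : L * F (s + e) ≤ F b * F s := by
      calc L * F (s + e) ≤ F (b - e / 2) * F (s + e) :=
            mul_le_mul_of_nonneg_right (hLF (e / 2) (by positivity)) (hF0 _)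
        _ ≤ F (b + e / 2) * F s := hstep
        _ ≤ F b * F s := mul_le_mul_of_nonneg_right (hFanti (by linarith)) (hF0 _)
    rw [hrdef, div_mul_eq_mul_div, le_div_iff₀ hL0]
    linarith [hA]
  have main : ∀ i : ℕ, i ≤ k → F (i * e) ≤ r ^ i := by
    intro i
    induction i with
    | zero => intro _; simpa using hF1 0
    | succ j ih =>
      intro hjk
      have hjk' : j ≤ k := Nat.le_of_succ_le hjk
      have hjr : (j : ℝ) ≤ (k : ℝ) - 1 := by
        have : (j:ℝ) + 1 ≤ (k:ℝ) := by exact_mod_cast hjk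
        linarith
      have hbound : (j : ℝ) * e ≤ b - e / 2 := by
        have h1 : (j:ℝ) * e ≤ ((k:ℝ) - 1) * e := by nlinarith
        have h2 : ((k:ℝ) - 1) * e = b / 2 - e := by rw [sub_mul, hkh]; ring
        nlinarith
      have hstep := step ((j:ℝ) * e) (by positivity) hbound
      calc F ((j + 1 : ℕ) * e) = F ((j:ℝ) * e + e) := by push_cast; ring_nf
        _ ≤ r * F ((j:ℝ) * e) := hstep
        _ ≤ r * r ^ j := mul_le_mul_of_nonneg_left (ih hjk') hr0
        _ = r ^ (j + 1) := by ring
  have hfinal : L ≤ F ((k:ℝ) * e) := by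
    rw [hkh]
    have : b - b / 2 = b / 2 := by ring
    calc L ≤ F (b - b / 2) := hLF (b / 2) (by linarith)
      _ = F (b / 2) := by rw [this]
  linarith [main k le_rfl, hk, hfinal]

lemma arr_meas (X : ℕ → Ω → ℝ) (hX : ∀ n, Measurable (X n)) (n : ℕ) :
    Measurable (arr X n) := by
  unfold arr
  exact Finset.measurable_sum _ fun i _ => hX i

lemma indep_slice (μ : Measure Ω) [IsProbabilityMeasure μ]
    (X : ℕ → Ω → ℝ) (T : Ω → ℝ) (hXmeas : ∀ n, Measurable (X n))
    (hTmeas : Measurable T)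
    (hindep : IndepFun T (fun ω n => X n ω) μ) (n : ℕ) :
    μ {ω | arr X n ω ≤ T ω} = ∫⁻ ω, μ {ω' | arr X n ω ≤ T ω'} ∂μ := by
  set V : Ω → ℕ → ℝ := fun ω i => X i ω with hVdef
  have hV : Measurable V := measurable_pi_lambda _ fun i => hXmeas i
  set g : (ℕ → ℝ) → ℝ := fun v => ∑ i ∈ Finset.range n, v i with hgdef
  have hg : Measurable g := Finset.measurable_sum _ fun i _ => measurable_pi_apply i
  have hmap : μ.map (fun ω => (V ω, T ω)) = (μ.map V).prod (μ.map T) :=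
    (indepFun_iff_map_prod_eq_prod_map_map hV.aemeasurable hTmeas.aemeasurable).mp
      hindep.symm
  have hset : MeasurableSet {p : (ℕ → ℝ) × ℝ | g p.1 ≤ p.2} :=
    measurableSet_le (hg.comp measurable_fst) measurable_snd
  have h1 : μ {ω | arr X n ω ≤ T ω}
      = μ.map (fun ω => (V ω, T ω)) {p : (ℕ → ℝ) × ℝ | g p.1 ≤ p.2} := by
    rw [Measure.map_apply (hV.prodMk hTmeas) hset]
    rfl
  have hGmeas : Measurable (fun c : ℝ => μ.map T {t : ℝ | c ≤ t}) := by
    have hanti : Antitone (fun c : ℝ => μ.map T {t : ℝ | c ≤ t}) := fun s t hst =>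
      measure_mono fun x (hx : t ≤ x) => le_trans hst hx
    exact hanti.measurable
  rw [h1, hmap, Measure.prod_apply hset]
  have hsl : (fun v => (μ.map T) (Prod.mk v ⁻¹' {p : (ℕ → ℝ) × ℝ | g p.1 ≤ p.2}))
      = fun v => (μ.map T) {t : ℝ | g v ≤ t} := rfl
  rw [hsl]
  have hlm := lintegral_map (μ := μ) (f := fun v => (μ.map T) {t : ℝ | g v ≤ t})
    (g := V) (hGmeas.comp hg) hV
  rw [hlm]
  apply lintegral_congr
  intro ω
  show (Measure.map T μ) {t : ℝ | g (V ω) ≤ t} = _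
  rw [show {t : ℝ | g (V ω) ≤ t} = Set.Ici (g (V ω)) from rfl,
    Measure.map_apply hTmeas measurableSet_Ici]
  rfl

/-- Lemma: sufficient conditions for `N(T)` to be d-DFR.
Let `N` be a general counting process with interarrival times `X 0, X 1, …`
(mathematically `X_1, X_2, …`) and arrival times `S n = arr X n`, and let `T`
be a nonnegative random time independent of the process. Assume `T` is DFR and
`P(T = 0)·P(X_1 = 0) = 0`. If `E[F̄_T(X_1)]² ≤ E[F̄_T(S_2)]` and
`E[F̄_T(S_{n+1})]² ≤ E[F̄_T(S_n)]·E[F̄_T(S_{n+2})]` for all `n ≥ 1`,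
then `N(T)` is d-DFR. -/
theorem stmt0
    (μ : Measure Ω) [IsProbabilityMeasure μ]
    (X : ℕ → Ω → ℝ) (T : Ω → ℝ)
    (hXmeas : ∀ n, Measurable (X n)) (hXnonneg : ∀ n ω, 0 ≤ X n ω)
    (hXnondeg : ∀ n, μ {ω | X n ω = 0} < 1)
    (hTmeas : Measurable T) (hTnonneg : ∀ ω, 0 ≤ T ω)
    (hindep : IndepFun T (fun ω n => X n ω) μ)
    (ha : IsDFR μ T)
    (hb : μ {ω | T ω = 0} * μ {ω | X 0 ω = 0} = 0)
    (h0 : (∫ ω, surv μ T (X 0 ω) ∂μ) ^ 2 ≤ ∫ ω, surv μ T (arr X 2 ω) ∂μ)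
    (hn : ∀ n : ℕ, 1 ≤ n →
      (∫ ω, surv μ T (arr X (n + 1) ω) ∂μ) ^ 2 ≤
        (∫ ω, surv μ T (arr X n ω) ∂μ) * (∫ ω, surv μ T (arr X (n + 2) ω) ∂μ)) :
    IsdDFR μ (fun ω => countN X (T ω) ω) := by
  classical
  -- events
  have hev : ∀ m : ℕ, {ω | (m : ℕ∞) ≤ countN X (T ω) ω} = {ω | arr X m ω ≤ T ω} :=
    fun m => Set.ext fun ω => countN_ge_iff X hXnonneg m (T ω) (hTnonneg ω) ω
  -- atoms
  have hatom : ∀ b : ℝ, 0 < b → μ {ω | b ≤ T ω} = μ {ω | b < T ω} :=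
    fun b hb' => no_pos_atom μ T ha hb'
  -- a.e. slice equality for m ≥ 1
  have hAE : ∀ m : ℕ, 1 ≤ m →
      ∀ᵐ ω ∂μ, μ {ω' | arr X m ω ≤ T ω'} = μ {ω' | arr X m ω < T ω'} := by
    intro m hm
    rcases mul_eq_zero.mp hb with hT0 | hX0
    · refine ae_of_all _ fun ω => ?_
      rcases lt_or_eq_of_le (arr_nonneg X hXnonneg m ω) with hpos | hzero
      · exact hatom _ hpos
      · rw [← hzero]
        refine le_antisymm ?_ (measure_mono fun ω' (h : (0:ℝ) < T ω') => le_of_lt h)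
        have hsub : {ω' | (0:ℝ) ≤ T ω'} ⊆ {ω' | (0:ℝ) < T ω'} ∪ {ω' | T ω' = 0} := by
          intro ω' h
          rcases lt_or_eq_of_le (show (0:ℝ) ≤ T ω' from h) with h' | h'
          · exact Or.inl h'
          · exact Or.inr h'.symm
        calc μ {ω' | (0:ℝ) ≤ T ω'} ≤ μ ({ω' | (0:ℝ) < T ω'} ∪ {ω' | T ω' = 0}) :=
              measure_mono hsub
          _ ≤ μ {ω' | (0:ℝ) < T ω'} + μ {ω' | T ω' = 0} := measure_union_le _ _
          _ = μ {ω' | (0:ℝ) < T ω'} := by rw [hT0, add_zero]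
    · have hx : ∀ᵐ ω ∂μ, ¬ X 0 ω = 0 := by
        rw [ae_iff]
        simpa using hX0
      filter_upwards [hx] with ω hω
      exact hatom _ (arr_pos X hXnonneg hm (lt_of_le_of_ne (hXnonneg 0 ω) (Ne.symm hω)))
  have harrm : ∀ m, Measurable (arr X m) := arr_meas X hXmeas
  have hGmeas : Measurable (fun t : ℝ => μ {ω' | t < T ω'}) := by
    have hanti : Antitone (fun t : ℝ => μ {ω' | t < T ω'}) := fun s t hst =>
      measure_mono fun ω (h : t < T ω) => lt_of_le_of_lt hst h
    exact hanti.measurable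
  -- key identity
  have hkey : ∀ m : ℕ, 1 ≤ m →
      μ {ω | arr X m ω ≤ T ω} = ENNReal.ofReal (∫ ω, surv μ T (arr X m ω) ∂μ) := by
    intro m hm
    rw [indep_slice μ X T hXmeas hTmeas hindep m, lintegral_congr_ae (hAE m hm)]
    have hi : ∫ ω, surv μ T (arr X m ω) ∂μ
        = (∫⁻ ω, μ {ω' | arr X m ω < T ω'} ∂μ).toReal := by
      simp only [surv]
      rw [integral_toReal (f := fun ω => μ {ω' | arr X m ω < T ω'})
        ((hGmeas.comp (harrm m)).aemeasurable)
        (ae_of_all _ fun ω => measure_lt_top μ _)]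
    rw [hi, ENNReal.ofReal_toReal]
    apply ne_top_of_le_ne_top (b := (1 : ENNReal)) ENNReal.one_ne_top
    calc ∫⁻ ω, μ {ω' | arr X m ω < T ω'} ∂μ ≤ ∫⁻ _, 1 ∂μ :=
          lintegral_mono fun ω => prob_le_one
      _ = 1 := by simp
  have hI : ∀ m : ℕ, 0 ≤ ∫ ω, surv μ T (arr X m ω) ∂μ :=
    fun m => integral_nonneg fun ω => ENNReal.toReal_nonneg
  intro n
  simp only
  have hc1 : ((n : ℕ∞) + 1) = ((n + 1 : ℕ) : ℕ∞) := by push_cast; ring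
  have hc2 : ((n : ℕ∞) + 2) = ((n + 2 : ℕ) : ℕ∞) := by push_cast; ring
  rw [hc1, hc2, hev (n + 1), hev n, hev (n + 2)]
  cases n with
  | zero =>
    have h00 : {ω | arr X 0 ω ≤ T ω} = Set.univ :=
      Set.eq_univ_of_forall fun ω => by
        simpa [arr] using hTnonneg ω
    rw [h00, measure_univ, one_mul, hkey 1 le_rfl, hkey 2 (by norm_num),
      ← ENNReal.ofReal_pow (hI 1)]
    apply ENNReal.ofReal_le_ofReal
    have harr1 : (fun ω => surv μ T (arr X 1 ω)) = fun ω => surv μ T (X 0 ω) := by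
      funext ω
      simp [arr]
    rw [harr1]
    exact h0
  | succ m =>
    rw [hkey (m + 1) (Nat.le_add_left 1 m), hkey (m + 1 + 1) (by omega),
      hkey (m + 1 + 2) (by omega), ← ENNReal.ofReal_pow (hI _),
      ← ENNReal.ofReal_mul (hI _)]
    exact ENNReal.ofReal_le_ofReal (hn (m + 1) (Nat.le_add_left 1 m))
end

section
/- Let X_1, X_2 be nonnegative random variables and let T be a nonnegative random variable independent of (X_1, X_2) with survival function F̄_T. Assume T is DFR, the vector (X_1, X_2) is associated, and X_2 ≤_ST X_1. Then E[F̄_T(X_1)]² ≤ E[F̄_T(X_1 + X_2)]·F̄_T(0). -/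
open MeasureTheory ProbabilityTheory

variable {Ω : Type*} [MeasurableSpace Ω]

/-- The random vector `(Z, W)` is associated: `Cov(f(Z,W), g(Z,W)) ≥ 0` for all
componentwise increasing `f g : ℝ² → ℝ` for which the covariance exists. -/
def Associated2 {Ω' : Type*} [MeasurableSpace Ω'] (μ : Measure Ω') (Z W : Ω' → ℝ) : Prop :=
  ∀ f g : ℝ × ℝ → ℝ, Monotone f → Monotone g →
    Integrable (fun ω => f (Z ω, W ω)) μ → Integrable (fun ω => g (Z ω, W ω)) μ →
    Integrable (fun ω => f (Z ω, W ω) * g (Z ω, W ω)) μ →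
    (∫ ω, f (Z ω, W ω) ∂μ) * (∫ ω, g (Z ω, W ω) ∂μ) ≤
      ∫ ω, f (Z ω, W ω) * g (Z ω, W ω) ∂μ

/-- Usual stochastic order: `X ≤_ST Y` iff `P(X > t) ≤ P(Y > t)` for all `t`. -/
def StochLE {Ω' : Type*} [MeasurableSpace Ω'] (μ : Measure Ω') (X Y : Ω' → ℝ) : Prop :=
  ∀ t : ℝ, μ {ω | t < X ω} ≤ μ {ω | t < Y ω}

/-! ### Auxiliary lemmas -/

lemma surv_anti (μ : Measure Ω) [IsProbabilityMeasure μ] (T : Ω → ℝ) :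
    Antitone (surv μ T) := fun x y hxy =>
  ENNReal.toReal_mono (measure_ne_top μ _)
    (measure_mono fun ω h => lt_of_le_of_lt hxy h)

lemma surv_nonneg (μ : Measure Ω) (T : Ω → ℝ) (t : ℝ) : 0 ≤ surv μ T t :=
  ENNReal.toReal_nonneg

lemma surv_le_one (μ : Measure Ω) [IsProbabilityMeasure μ] (T : Ω → ℝ) (t : ℝ) :
    surv μ T t ≤ 1 := by
  have : (μ {ω | t < T ω}).toReal ≤ (1 : ENNReal).toReal :=
    ENNReal.toReal_mono (by simp) prob_le_one
  simpa [surv] using this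

lemma integrable_of_bdd (μ : Measure Ω) [IsProbabilityMeasure μ] {f : Ω → ℝ}
    (hf : AEStronglyMeasurable f μ) (h0 : ∀ ω, 0 ≤ f ω) (h1 : ∀ ω, f ω ≤ 1) :
    Integrable f μ :=
  (integrable_const (1 : ℝ)).mono' hf (ae_of_all _ fun ω => by
    rw [Real.norm_eq_abs, abs_of_nonneg (h0 ω)]; simpa using h1 ω)

/-- `∫ surv (X ω)` as the product measure of the region under `T`. -/
lemma integral_surv_eq (μ : Measure Ω) [IsProbabilityMeasure μ] {T X : Ω → ℝ}
    (hT : Measurable T) (hX : Measurable X) :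
    ∫ ω, surv μ T (X ω) ∂μ = ((μ.prod μ) {p : Ω × Ω | X p.1 < T p.2}).toReal := by
  have hS : MeasurableSet {p : Ω × Ω | X p.1 < T p.2} :=
    measurableSet_lt (hX.comp measurable_fst) (hT.comp measurable_snd)
  have hmk : ∀ ω, Prod.mk ω ⁻¹' {p : Ω × Ω | X p.1 < T p.2} = {ω' | X ω < T ω'} :=
    fun ω => rfl
  rw [Measure.prod_apply hS]
  have := integral_toReal (μ := μ)
    (f := fun ω => μ (Prod.mk ω ⁻¹' {p : Ω × Ω | X p.1 < T p.2}))
    ((measurable_measure_prodMk_left hS).aemeasurable)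
    (ae_of_all _ fun ω => (measure_lt_top μ _))
  rw [← this]
  rfl

/-- Monotone step: `X₂ ≤ₛₜ X₁` gives `μ {X₁ < t} ≤ μ {X₂ < t}`. -/
lemma meas_lt_mono (μ : Measure Ω) [IsProbabilityMeasure μ] {X₁ X₂ : Ω → ℝ}
    (hX₁ : Measurable X₁) (hX₂ : Measurable X₂)
    (hst : StochLE μ X₂ X₁) (t : ℝ) :
    μ {ω | X₁ ω < t} ≤ μ {ω | X₂ ω < t} := by
  have hiInter : ∀ X : Ω → ℝ, {ω | t ≤ X ω} = ⋂ n : ℕ, {ω | t - 1 / (n + 1) < X ω} := by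
    intro X
    ext ω
    simp only [Set.mem_setOf_eq, Set.mem_iInter]
    constructor
    · intro h n
      have h1 : (0 : ℝ) < 1 / (n + 1) := by positivity
      linarith
    · intro h
      by_contra hlt
      push_neg at hlt
      obtain ⟨n, hn⟩ := exists_nat_one_div_lt (sub_pos.2 hlt)
      have := h n
      linarith
  have hanti : ∀ X : Ω → ℝ, Antitone (fun n : ℕ => {ω | t - 1 / (n + 1) < X ω}) := by
    intro X n m hnm ω hω
    simp only [Set.mem_setOf_eq] at *
    have h1 : t - 1 / (m + 1 : ℝ) ≥ t - 1 / (n + 1 : ℝ) := by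
      have : (1 : ℝ) / (m + 1) ≤ 1 / (n + 1) := by
        apply one_div_le_one_div_of_le (by positivity)
        exact add_le_add_left (Nat.cast_le.mpr hnm) 1
      linarith
    linarith
  have hle : μ {ω | t ≤ X₂ ω} ≤ μ {ω | t ≤ X₁ ω} := by
    have hms : ∀ n : ℕ, NullMeasurableSet {ω | t - 1 / (n + 1) < X₁ ω} μ := fun n =>
      (show MeasurableSet {ω | t - 1 / (n + 1 : ℝ) < X₁ ω} from hX₁ measurableSet_Ioi).nullMeasurableSet
    rw [hiInter X₁,
      Directed.measure_iInter (s := fun n : ℕ => {ω | t - 1 / (n + 1) < X₁ ω})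
        hms ((hanti X₁).directed_ge) ⟨0, measure_ne_top μ _⟩]
    refine le_iInf fun n => ?_
    calc μ {ω | t ≤ X₂ ω} ≤ μ {ω | t - 1 / (n + 1) < X₂ ω} :=
          measure_mono fun ω hω => by
            simp only [Set.mem_setOf_eq] at *
            have h1 : (0 : ℝ) < 1 / (n + 1) := by positivity
            linarith
      _ ≤ μ {ω | t - 1 / (n + 1) < X₁ ω} := hst _
  have hcompl : ∀ X : Ω → ℝ, Measurable X → μ {ω | X ω < t} = 1 - μ {ω | t ≤ X ω} := by
    intro X hX
    have : {ω | X ω < t} = {ω | t ≤ X ω}ᶜ := by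
      ext ω; simp [not_le]
    have hms' : MeasurableSet {ω | t ≤ X ω} := hX measurableSet_Ici
    rw [this, measure_compl hms' (measure_ne_top μ _), measure_univ]
  rw [hcompl X₁ hX₁, hcompl X₂ hX₂]
  exact tsub_le_tsub_left hle 1

/-- If `T` is DFR and independent of `(X₁, X₂)`, `(X₁, X₂)` is
associated and `X₂ ≤_ST X₁`, then `E[F̄_T(X₁)]² ≤ E[F̄_T(X₁+X₂)]·F̄_T(0)`. -/
theorem stmt1
    (μ : Measure Ω) [IsProbabilityMeasure μ]
    (X₁ X₂ T : Ω → ℝ)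
    (hX₁meas : Measurable X₁) (hX₂meas : Measurable X₂) (hTmeas : Measurable T)
    (hX₁nonneg : ∀ ω, 0 ≤ X₁ ω) (hX₂nonneg : ∀ ω, 0 ≤ X₂ ω) (hTnonneg : ∀ ω, 0 ≤ T ω)
    (hindep : IndepFun T (fun ω => (X₁ ω, X₂ ω)) μ)
    (hDFR : IsDFR μ T)
    (hassoc : Associated2 μ X₁ X₂)
    (hst : StochLE μ X₂ X₁) :
    (∫ ω, surv μ T (X₁ ω) ∂μ) ^ 2 ≤ (∫ ω, surv μ T (X₁ ω + X₂ ω) ∂μ) * surv μ T 0 := by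
  have hsurvmeas : Measurable (surv μ T) := (surv_anti μ T).measurable
  have hm1 : Measurable fun ω => surv μ T (X₁ ω) := hsurvmeas.comp hX₁meas
  have hm2 : Measurable fun ω => surv μ T (X₂ ω) := hsurvmeas.comp hX₂meas
  have hm12 : Measurable fun ω => surv μ T (X₁ ω + X₂ ω) :=
    hsurvmeas.comp (hX₁meas.add hX₂meas)
  have hi1 : Integrable (fun ω => surv μ T (X₁ ω)) μ :=
    integrable_of_bdd μ hm1.aestronglyMeasurable (fun ω => surv_nonneg μ T _)
      (fun ω => surv_le_one μ T _)
  have hi2 : Integrable (fun ω => surv μ T (X₂ ω)) μ :=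
    integrable_of_bdd μ hm2.aestronglyMeasurable (fun ω => surv_nonneg μ T _)
      (fun ω => surv_le_one μ T _)
  have hi12 : Integrable (fun ω => surv μ T (X₁ ω) * surv μ T (X₂ ω)) μ :=
    integrable_of_bdd μ (hm1.mul hm2).aestronglyMeasurable
      (fun ω => mul_nonneg (surv_nonneg μ T _) (surv_nonneg μ T _))
      (fun ω => mul_le_one₀ (surv_le_one μ T _) (surv_nonneg μ T _) (surv_le_one μ T _))
  have hisum : Integrable (fun ω => surv μ T (X₁ ω + X₂ ω)) μ :=
    integrable_of_bdd μ hm12.aestronglyMeasurable (fun ω => surv_nonneg μ T _)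
      (fun ω => surv_le_one μ T _)
  -- Step A : ∫ surv(X₁) ≤ ∫ surv(X₂)
  have hA : ∫ ω, surv μ T (X₁ ω) ∂μ ≤ ∫ ω, surv μ T (X₂ ω) ∂μ := by
    rw [integral_surv_eq μ hTmeas hX₁meas, integral_surv_eq μ hTmeas hX₂meas]
    apply ENNReal.toReal_mono (measure_ne_top _ _)
    have hS1 : MeasurableSet {p : Ω × Ω | X₁ p.1 < T p.2} :=
      measurableSet_lt (hX₁meas.comp measurable_fst) (hTmeas.comp measurable_snd)
    have hS2 : MeasurableSet {p : Ω × Ω | X₂ p.1 < T p.2} :=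
      measurableSet_lt (hX₂meas.comp measurable_fst) (hTmeas.comp measurable_snd)
    rw [Measure.prod_apply_symm hS1, Measure.prod_apply_symm hS2]
    exact lintegral_mono fun ω' =>
      meas_lt_mono μ hX₁meas hX₂meas hst (T ω')
  -- Step B : association
  have hB : (∫ ω, surv μ T (X₁ ω) ∂μ) * (∫ ω, surv μ T (X₂ ω) ∂μ) ≤
      ∫ ω, surv μ T (X₁ ω) * surv μ T (X₂ ω) ∂μ := by
    have hf : Monotone fun p : ℝ × ℝ => -(surv μ T p.1) := fun p q hpq =>
      neg_le_neg ((surv_anti μ T) hpq.1)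
    have hg : Monotone fun p : ℝ × ℝ => -(surv μ T p.2) := fun p q hpq =>
      neg_le_neg ((surv_anti μ T) hpq.2)
    have := hassoc (fun p => -(surv μ T p.1)) (fun p => -(surv μ T p.2)) hf hg
      hi1.neg hi2.neg (by simpa [neg_mul_neg] using hi12)
    simp only [neg_mul_neg, integral_neg, neg_mul, mul_neg, neg_neg] at this
    exact this
  -- Step C : DFR pointwise
  have hC : ∀ ω, surv μ T (X₁ ω) * surv μ T (X₂ ω) ≤
      surv μ T (X₁ ω + X₂ ω) * surv μ T 0 := by
    intro ω
    have h := hDFR 0 (X₁ ω) (X₂ ω) le_rfl (hX₁nonneg ω) (hX₂nonneg ω)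
    rw [zero_add] at h
    have h' := ENNReal.toReal_mono
      (ENNReal.mul_ne_top (measure_ne_top μ _) (measure_ne_top μ _)) h
    rw [ENNReal.toReal_mul, ENNReal.toReal_mul] at h'
    calc surv μ T (X₁ ω) * surv μ T (X₂ ω)
        = surv μ T (X₂ ω) * surv μ T (X₁ ω) := mul_comm _ _
      _ ≤ surv μ T (X₁ ω + X₂ ω) * surv μ T 0 := h'
  have hCint : ∫ ω, surv μ T (X₁ ω) * surv μ T (X₂ ω) ∂μ ≤
      (∫ ω, surv μ T (X₁ ω + X₂ ω) ∂μ) * surv μ T 0 := by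
    rw [← integral_mul_const]
    exact integral_mono hi12 (hisum.mul_const _) hC
  have h0 : 0 ≤ ∫ ω, surv μ T (X₁ ω) ∂μ :=
    integral_nonneg fun ω => surv_nonneg μ T _
  calc (∫ ω, surv μ T (X₁ ω) ∂μ) ^ 2
      = (∫ ω, surv μ T (X₁ ω) ∂μ) * (∫ ω, surv μ T (X₁ ω) ∂μ) := sq _
    _ ≤ (∫ ω, surv μ T (X₁ ω) ∂μ) * (∫ ω, surv μ T (X₂ ω) ∂μ) := by
        exact mul_le_mul_of_nonneg_left hA h0
    _ ≤ ∫ ω, surv μ T (X₁ ω) * surv μ T (X₂ ω) ∂μ := hB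
    _ ≤ (∫ ω, surv μ T (X₁ ω + X₂ ω) ∂μ) * surv μ T 0 := hCint
end

section
/- Let H̄ : [0,∞) → [0,1] be a DFR survival function with H̄(0) = 1, and let (Z, W) be a nonnegative random vector such that (Z, W) is associated and W ≤_ST Z. Then E[H̄(Z)]² ≤ E[H̄(Z + W)]. -/
open MeasureTheory ProbabilityTheory

variable {Ω : Type*} [MeasurableSpace Ω]

/-- An abstract survival function `G : ℝ → ℝ` (restricted to `[0,∞)`) has the
DFR property: `G(s+z)·G(t) ≤ G(t+z)·G(s)` for all `0 ≤ s ≤ t`, `z ≥ 0`. -/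
def DFRfun (G : ℝ → ℝ) : Prop :=
  ∀ s t z : ℝ, 0 ≤ s → s ≤ t → 0 ≤ z → G (s + z) * G t ≤ G (t + z) * G s

/-- `G` is a survival function on `[0,∞)`: measurable, decreasing,
with values in `[0,1]`. -/
def IsSurvFun (G : ℝ → ℝ) : Prop :=
  Measurable G ∧ (∀ s t : ℝ, 0 ≤ s → s ≤ t → G t ≤ G s) ∧
    ∀ t : ℝ, 0 ≤ t → 0 ≤ G t ∧ G t ≤ 1

/-- Bounded measurable functions are integrable w.r.t. a probability measure. -/
lemma aux_integrable_of_bdd (μ : Measure Ω) [IsProbabilityMeasure μ] (h : Ω → ℝ)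
    (hmeas : Measurable h) (hb : ∀ ω, |h ω| ≤ 1) : Integrable h μ :=
  (integrable_const (1 : ℝ)).mono' hmeas.aestronglyMeasurable
    (Filter.Eventually.of_forall fun ω => by simpa using hb ω)

/-- If `W ≤_ST Z` then also the closed-tail probabilities are comparable. -/
lemma aux_ge_tail (μ : Measure Ω) [IsProbabilityMeasure μ] (Z W : Ω → ℝ)
    (hZmeas : Measurable Z) (hst : StochLE μ W Z) (c : ℝ) :
    μ {ω | c ≤ W ω} ≤ μ {ω | c ≤ Z ω} := by
  have hinter : ∀ X : Ω → ℝ, {ω | c ≤ X ω} = ⋂ n : ℕ, {ω | c - 1 / (n + 1) < X ω} := by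
    intro X
    ext ω
    simp only [Set.mem_iInter, Set.mem_setOf_eq]
    constructor
    · intro h n
      have : (0 : ℝ) < 1 / (n + 1) := by positivity
      linarith
    · intro h
      by_contra hlt
      push_neg at hlt
      obtain ⟨n, hn⟩ := exists_nat_one_div_lt (show (0:ℝ) < c - X ω by linarith)
      have := h n
      linarith
  have htend : Filter.Tendsto (fun n : ℕ => μ {ω | c - 1 / (n + 1) < Z ω}) Filter.atTop
      (nhds (μ {ω | c ≤ Z ω})) := by
    rw [hinter Z]
    exact tendsto_measure_iInter_atTop
      (fun n => (measurableSet_lt measurable_const hZmeas).nullMeasurableSet)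
      (fun m n hmn => by
        intro ω hω
        simp only [Set.mem_setOf_eq] at hω ⊢
        have h1 : (1 : ℝ) / (n + 1) ≤ 1 / (m + 1) := by
          apply one_div_le_one_div_of_le (by positivity)
          have : (m : ℝ) ≤ n := Nat.cast_le.2 hmn
          linarith
        linarith)
      ⟨0, measure_ne_top μ _⟩
  refine ge_of_tendsto' htend fun n => ?_
  calc μ {ω | c ≤ W ω} ≤ μ {ω | c - 1 / (n + 1) < W ω} := by
        apply measure_mono
        intro ω hω
        simp only [Set.mem_setOf_eq] at hω ⊢
        have : (0 : ℝ) < 1 / ((n : ℝ) + 1) := by positivity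
        linarith
    _ ≤ μ {ω | c - 1 / (n + 1) < Z ω} := hst _

/-- Tail probabilities of `G ∘ Z` are dominated by those of `G ∘ W` when
`W ≤_ST Z` and `G` is decreasing on `[0,∞)`. -/
lemma aux_tail_comp (μ : Measure Ω) [IsProbabilityMeasure μ]
    (G : ℝ → ℝ) (Z W : Ω → ℝ)
    (hGmeas : Measurable G) (hGdec : ∀ s t : ℝ, 0 ≤ s → s ≤ t → G t ≤ G s)
    (hZmeas : Measurable Z) (hWmeas : Measurable W)
    (hZnonneg : ∀ ω, 0 ≤ Z ω) (hWnonneg : ∀ ω, 0 ≤ W ω)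
    (hst : StochLE μ W Z) (t : ℝ) :
    μ {ω | t < G (Z ω)} ≤ μ {ω | t < G (W ω)} := by
  suffices h : μ {ω | G (W ω) ≤ t} ≤ μ {ω | G (Z ω) ≤ t} by
    have hcZ : {ω | t < G (Z ω)} = {ω | G (Z ω) ≤ t}ᶜ := by
      ext ω; simp [not_le]
    have hcW : {ω | t < G (W ω)} = {ω | G (W ω) ≤ t}ᶜ := by
      ext ω; simp [not_le]
    have mZ : MeasurableSet {ω | G (Z ω) ≤ t} :=
      measurableSet_le (hGmeas.comp hZmeas) measurable_const
    have mW : MeasurableSet {ω | G (W ω) ≤ t} :=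
      measurableSet_le (hGmeas.comp hWmeas) measurable_const
    rw [hcZ, hcW, measure_compl mZ (measure_ne_top μ _),
      measure_compl mW (measure_ne_top μ _)]
    exact tsub_le_tsub_left h _
  set S : Set ℝ := {x | 0 ≤ x ∧ G x ≤ t} with hS
  by_cases hSne : S.Nonempty
  · have hbdd : BddBelow S := ⟨0, fun x hx => hx.1⟩
    set c := sInf S with hc
    have hc0 : 0 ≤ c := le_csInf hSne fun x hx => hx.1
    have hgt : ∀ x, c < x → G x ≤ t := by
      intro x hx
      obtain ⟨s, hsS, hsx⟩ := exists_lt_of_csInf_lt hSne hx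
      exact le_trans (hGdec s x hsS.1 hsx.le) hsS.2
    have hlt : ∀ x, 0 ≤ x → G x ≤ t → c ≤ x := fun x h0 hGx => csInf_le hbdd ⟨h0, hGx⟩
    by_cases hcS : G c ≤ t
    · have hset : ∀ X : Ω → ℝ, (∀ ω, 0 ≤ X ω) →
          {ω | G (X ω) ≤ t} = {ω | c ≤ X ω} := by
        intro X hX
        ext ω
        simp only [Set.mem_setOf_eq]
        constructor
        · exact fun h => hlt _ (hX ω) h
        · exact fun h => le_trans (hGdec c (X ω) hc0 h) hcS
      rw [hset Z hZnonneg, hset W hWnonneg]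
      exact aux_ge_tail μ Z W hZmeas hst c
    · have hset : ∀ X : Ω → ℝ, (∀ ω, 0 ≤ X ω) →
          {ω | G (X ω) ≤ t} = {ω | c < X ω} := by
        intro X hX
        ext ω
        simp only [Set.mem_setOf_eq]
        constructor
        · intro h
          rcases lt_or_eq_of_le (hlt _ (hX ω) h) with h' | h'
          · exact h'
          · exact absurd (h' ▸ h) hcS
        · exact fun h => hgt _ h
      rw [hset Z hZnonneg, hset W hWnonneg]
      exact hst c
  · have hset : ∀ X : Ω → ℝ, (∀ ω, 0 ≤ X ω) → {ω | G (X ω) ≤ t} = (∅ : Set Ω) := by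
      intro X hX
      ext ω
      simp only [Set.mem_setOf_eq, Set.mem_empty_iff_false, iff_false]
      intro h
      exact hSne ⟨X ω, hX ω, h⟩
    rw [hset Z hZnonneg, hset W hWnonneg]

/-- Let `G : [0,∞) → [0,1]` be a DFR survival function with
`G 0 = 1`, and let `(Z, W)` be a nonnegative random vector that is associated
and such that `W ≤_ST Z`. Then `E[G(Z)]² ≤ E[G(Z+W)]`. -/
theorem stmt2
    (μ : Measure Ω) [IsProbabilityMeasure μ]
    (G : ℝ → ℝ) (Z W : Ω → ℝ)
    (hGsurv : IsSurvFun G) (hG0 : G 0 = 1) (hGDFR : DFRfun G)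
    (hZmeas : Measurable Z) (hWmeas : Measurable W)
    (hZnonneg : ∀ ω, 0 ≤ Z ω) (hWnonneg : ∀ ω, 0 ≤ W ω)
    (hassoc : Associated2 μ Z W)
    (hst : StochLE μ W Z) :
    (∫ ω, G (Z ω) ∂μ) ^ 2 ≤ ∫ ω, G (Z ω + W ω) ∂μ := by
  obtain ⟨hGmeas, hGdec, hGrange⟩ := hGsurv
  have habs : ∀ x : ℝ, 0 ≤ x → |G x| ≤ 1 := fun x hx =>
    abs_le.2 ⟨le_trans (by norm_num) (hGrange x hx).1, (hGrange x hx).2⟩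
  -- integrability facts
  have hIZ : Integrable (fun ω => G (Z ω)) μ :=
    aux_integrable_of_bdd μ _ (hGmeas.comp hZmeas) fun ω => habs _ (hZnonneg ω)
  have hIW : Integrable (fun ω => G (W ω)) μ :=
    aux_integrable_of_bdd μ _ (hGmeas.comp hWmeas) fun ω => habs _ (hWnonneg ω)
  have hIZW : Integrable (fun ω => G (Z ω) * G (W ω)) μ := by
    apply aux_integrable_of_bdd μ _ ((hGmeas.comp hZmeas).mul (hGmeas.comp hWmeas))
    intro ω
    show |G (Z ω) * G (W ω)| ≤ 1
    rw [abs_mul]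
    calc |G (Z ω)| * |G (W ω)| ≤ 1 * 1 :=
          mul_le_mul (habs _ (hZnonneg ω)) (habs _ (hWnonneg ω)) (abs_nonneg _) zero_le_one
      _ = 1 := one_mul 1
  have hIsum : Integrable (fun ω => G (Z ω + W ω)) μ :=
    aux_integrable_of_bdd μ _ (hGmeas.comp (hZmeas.add hWmeas)) fun ω =>
      habs _ (add_nonneg (hZnonneg ω) (hWnonneg ω))
  -- Step 1: pointwise superadditivity  G(Z)G(W) ≤ G(Z+W)
  have hpt : ∀ ω, G (Z ω) * G (W ω) ≤ G (Z ω + W ω) := by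
    intro ω
    have := hGDFR 0 (W ω) (Z ω) le_rfl (hWnonneg ω) (hZnonneg ω)
    rw [zero_add, hG0, mul_one, add_comm (W ω) (Z ω)] at this
    exact this
  have hstep1 : ∫ ω, G (Z ω) * G (W ω) ∂μ ≤ ∫ ω, G (Z ω + W ω) ∂μ :=
    integral_mono hIZW hIsum hpt
  -- Step 2: association  E[G(Z)]E[G(W)] ≤ E[G(Z)G(W)]
  have hstep2 : (∫ ω, G (Z ω) ∂μ) * (∫ ω, G (W ω) ∂μ) ≤ ∫ ω, G (Z ω) * G (W ω) ∂μ := by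
    set f : ℝ × ℝ → ℝ := fun p => -G (max p.1 0) with hf
    set g : ℝ × ℝ → ℝ := fun p => -G (max p.2 0) with hg
    have hmax : ∀ a b : ℝ, a ≤ b → G (max b 0) ≤ G (max a 0) := fun a b hab =>
      hGdec _ _ (le_max_right a 0) (max_le_max hab le_rfl)
    have hfmono : Monotone f := fun p q hpq => neg_le_neg (hmax _ _ hpq.1)
    have hgmono : Monotone g := fun p q hpq => neg_le_neg (hmax _ _ hpq.2)
    have hfeq : ∀ ω, f (Z ω, W ω) = -G (Z ω) := fun ω => by
      simp [hf, max_eq_left (hZnonneg ω)]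
    have hgeq : ∀ ω, g (Z ω, W ω) = -G (W ω) := fun ω => by
      simp [hg, max_eq_left (hWnonneg ω)]
    have key := hassoc f g hfmono hgmono
      (by simp only [hfeq]; exact hIZ.neg)
      (by simp only [hgeq]; exact hIW.neg)
      (by
        have : (fun ω => f (Z ω, W ω) * g (Z ω, W ω)) = fun ω => G (Z ω) * G (W ω) := by
          funext ω; rw [hfeq, hgeq]; ring
        rw [this]; exact hIZW)
    have heqf : (∫ ω, f (Z ω, W ω) ∂μ) = -∫ ω, G (Z ω) ∂μ := by
      simp only [hfeq]; exact integral_neg _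
    have heqg : (∫ ω, g (Z ω, W ω) ∂μ) = -∫ ω, G (W ω) ∂μ := by
      simp only [hgeq]; exact integral_neg _
    have heqfg : (∫ ω, f (Z ω, W ω) * g (Z ω, W ω) ∂μ) = ∫ ω, G (Z ω) * G (W ω) ∂μ := by
      congr 1; funext ω; rw [hfeq, hgeq]; ring
    rw [heqf, heqg, heqfg, neg_mul_neg] at key
    exact key
  -- Step 3: stochastic order  E[G(Z)] ≤ E[G(W)], via layer cake
  have hstep3 : ∫ ω, G (Z ω) ∂μ ≤ ∫ ω, G (W ω) ∂μ := by
    have hnnZ : 0 ≤ᵐ[μ] fun ω => G (Z ω) :=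
      Filter.Eventually.of_forall fun ω => (hGrange _ (hZnonneg ω)).1
    have hnnW : 0 ≤ᵐ[μ] fun ω => G (W ω) :=
      Filter.Eventually.of_forall fun ω => (hGrange _ (hWnonneg ω)).1
    rw [integral_eq_lintegral_of_nonneg_ae hnnZ (hGmeas.comp hZmeas).aestronglyMeasurable,
      integral_eq_lintegral_of_nonneg_ae hnnW (hGmeas.comp hWmeas).aestronglyMeasurable]
    have hlcZ := lintegral_eq_lintegral_meas_lt μ hnnZ (hGmeas.comp hZmeas).aemeasurable
    have hlcW := lintegral_eq_lintegral_meas_lt μ hnnW (hGmeas.comp hWmeas).aemeasurable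
    rw [hlcZ, hlcW]
    have hmono : ∫⁻ t in Set.Ioi (0:ℝ), μ {ω | t < G (Z ω)} ≤
        ∫⁻ t in Set.Ioi (0:ℝ), μ {ω | t < G (W ω)} := by
      apply setLIntegral_mono_ae' measurableSet_Ioi
      refine Filter.Eventually.of_forall fun t _ => ?_
      exact aux_tail_comp μ G Z W hGmeas hGdec hZmeas hWmeas hZnonneg hWnonneg hst t
    have hfin : ∫⁻ t in Set.Ioi (0:ℝ), μ {ω | t < G (W ω)} ≠ ⊤ := by
      rw [← hlcW]
      refine ne_top_of_le_ne_top (by simp : (1 : ENNReal) ≠ ⊤) ?_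
      calc ∫⁻ ω, ENNReal.ofReal (G (W ω)) ∂μ ≤ ∫⁻ _, 1 ∂μ := by
            apply lintegral_mono
            intro ω
            exact ENNReal.ofReal_le_of_le_toReal (by simp [(hGrange _ (hWnonneg ω)).2])
        _ = 1 := by simp
    exact ENNReal.toReal_mono hfin hmono
  -- Conclusion
  have hnnIZ : 0 ≤ ∫ ω, G (Z ω) ∂μ :=
    integral_nonneg fun ω => (hGrange _ (hZnonneg ω)).1
  calc (∫ ω, G (Z ω) ∂μ) ^ 2 = (∫ ω, G (Z ω) ∂μ) * (∫ ω, G (Z ω) ∂μ) := sq _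
    _ ≤ (∫ ω, G (Z ω) ∂μ) * (∫ ω, G (W ω) ∂μ) := mul_le_mul_of_nonneg_left hstep3 hnnIZ
    _ ≤ ∫ ω, G (Z ω) * G (W ω) ∂μ := hstep2
    _ ≤ ∫ ω, G (Z ω + W ω) ∂μ := hstep1
end

section
/- Let N(t) = sup{n ≥ 0 : S_n ≤ t} be a general counting process with interarrival times X_1, X_2, … and arrival times S_n = X_1 + ⋯ + X_n, and let T be a DFR nonnegative random time independent of the process, with survival function F̄_T. Fix a natural number n ≥ 1 and assume there exists a distributional version {(Z_{n+1}^x, Z_{n+2}^x) : x ∈ ℝ_+^n} of (X_{n+1}, X_{n+2}) given (X_1, …, X_n) and a set N_n ⊆ ℝ_+^n with P((X_1, …, X_n) ∈ N_n) = 1 such that for every DFR survival function H̄ with H̄(0) = 1 and every x ∈ N_n one has E[H̄(Z_{n+1}^x)]² ≤ E[H̄(Z_{n+1}^x + Z_{n+2}^x)]. Then E[F̄_T(S_{n+1})]² ≤ E[F̄_T(S_n)]·E[F̄_T(S_{n+2})]. -/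
open MeasureTheory ProbabilityTheory

variable {Ω : Type*} [MeasurableSpace Ω]

/-- A Cauchy–Schwarz-type inequality: if `f² ≤ g·h` a.e. for nonnegative
integrable functions, then `(∫f)² ≤ (∫g)(∫h)`. -/
lemma sq_integral_le_cs {α : Type*} [MeasurableSpace α] (μ : Measure α)
    {f g h : α → ℝ} (hf : Integrable f μ) (hg : Integrable g μ) (hh : Integrable h μ)
    (hf0 : 0 ≤ᵐ[μ] f) (hg0 : 0 ≤ᵐ[μ] g) (hh0 : 0 ≤ᵐ[μ] h)
    (hfgh : ∀ᵐ x ∂μ, f x ^ 2 ≤ g x * h x) :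
    (∫ x, f x ∂μ) ^ 2 ≤ (∫ x, g x ∂μ) * (∫ x, h x ∂μ) := by
  have If0 : 0 ≤ ∫ x, f x ∂μ := integral_nonneg_of_ae hf0
  have Ig0 : 0 ≤ ∫ x, g x ∂μ := integral_nonneg_of_ae hg0
  have Ih0 : 0 ≤ ∫ x, h x ∂μ := integral_nonneg_of_ae hh0
  set If := ∫ x, f x ∂μ
  set Ig := ∫ x, g x ∂μ
  set Ih := ∫ x, h x ∂μ
  have key : ∀ t : ℝ, 0 < t → If ≤ (t * Ig + Ih / t) / 2 := by
    intro t ht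
    have hmono : ∀ᵐ x ∂μ, f x ≤ (t * g x + h x / t) / 2 := by
      filter_upwards [hf0, hg0, hh0, hfgh] with x h1 h2 h3 h4
      have hA : 0 ≤ t * g x := mul_nonneg ht.le h2
      have hB : 0 ≤ h x / t := div_nonneg h3 ht.le
      calc f x ≤ Real.sqrt (g x * h x) := Real.le_sqrt_of_sq_le h4
        _ = Real.sqrt (t * g x) * Real.sqrt (h x / t) := by
              rw [← Real.sqrt_mul hA]; congr 1; field_simp
        _ ≤ (t * g x + h x / t) / 2 := by
              nlinarith [two_mul_le_add_sq (Real.sqrt (t * g x)) (Real.sqrt (h x / t)),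
                Real.sq_sqrt hA, Real.sq_sqrt hB]
    have hint : Integrable (fun x => (t * g x + h x / t) / 2) μ :=
      ((hg.const_mul t).add (hh.div_const t)).div_const 2
    calc If ≤ ∫ x, (t * g x + h x / t) / 2 ∂μ := integral_mono_ae hf hint hmono
      _ = (t * Ig + Ih / t) / 2 := by
          rw [integral_div, integral_add (hg.const_mul t) (hh.div_const t),
            MeasureTheory.integral_const_mul, integral_div]
  rcases eq_or_lt_of_le Ig0 with hIg | hIg
  · have hIf : If = 0 := by
      by_contra hne
      have hIfpos : 0 < If := lt_of_le_of_ne If0 (Ne.symm hne)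
      have ht : (0:ℝ) < Ih / (2 * If) + 1 := by positivity
      have h2 := key _ ht
      rw [← hIg, mul_zero, zero_add, div_div, le_div_iff₀ (by positivity)] at h2
      have he : If * ((Ih / (2 * If) + 1) * 2) = Ih + 2 * If := by
        field_simp
      rw [he] at h2; linarith
    rw [hIf]; nlinarith
  rcases eq_or_lt_of_le Ih0 with hIh | hIh
  · have hIf : If = 0 := by
      by_contra hne
      have hIfpos : 0 < If := lt_of_le_of_ne If0 (Ne.symm hne)
      have ht : (0:ℝ) < If / (Ig + 1) := by positivity
      have h2 := key _ ht
      rw [← hIh, zero_div, add_zero] at h2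
      have he : If / (Ig + 1) * Ig / 2 = If * Ig / (2 * (Ig + 1)) := by
        field_simp
      rw [he, le_div_iff₀ (by positivity)] at h2
      nlinarith [mul_nonneg If0 Ig0, hIfpos]
    rw [hIf]; nlinarith
  · have htpos : (0:ℝ) < Real.sqrt (Ih / Ig) := Real.sqrt_pos.2 (by positivity)
    set t := Real.sqrt (Ih / Ig) with hts
    have h2 := key t htpos
    have e1 : t * Ig = Real.sqrt (Ig * Ih) := by
      rw [hts, show Real.sqrt (Ih / Ig) * Ig = Real.sqrt (Ih / Ig * Ig ^ 2) from by
        rw [Real.sqrt_mul (by positivity) (Ig ^ 2), Real.sqrt_sq Ig0]]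
      congr 1
      field_simp
    have e2 : Ih / t = Real.sqrt (Ig * Ih) := by
      rw [div_eq_iff (ne_of_gt htpos), hts,
        ← Real.sqrt_mul (by positivity : (0:ℝ) ≤ Ig * Ih),
        show Ig * Ih * (Ih / Ig) = Ih ^ 2 by field_simp, Real.sqrt_sq Ih0]
    rw [e1, e2] at h2
    have h3 : If ≤ Real.sqrt (Ig * Ih) := by linarith
    calc If ^ 2 ≤ Real.sqrt (Ig * Ih) ^ 2 := pow_le_pow_left₀ If0 h3 2
      _ = Ig * Ih := Real.sq_sqrt (by positivity)

/-- Let `N` be a general counting process with interarrival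
times `X 0, X 1, …` (mathematically `X_1, X_2, …`), and `T` a DFR random time
independent of the process. Fix `n ≥ 1`, and suppose there is a distributional
version of `(X_{n+1}, X_{n+2})` given `(X_1, …, X_n)` — encoded as a Markov
kernel `κ` from `ℝⁿ` to `ℝ²` disintegrating the joint law — and a set `Nn` of
full measure for `(X_1, …, X_n)` such that for every `x ∈ Nn` and every DFR
survival function `G` with `G 0 = 1` one has
`(∫ G(z₁) dκₓ)² ≤ ∫ G(z₁+z₂) dκₓ`. Then
`E[F̄_T(S_{n+1})]² ≤ E[F̄_T(S_n)]·E[F̄_T(S_{n+2})]`. -/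
theorem stmt3
    (μ : Measure Ω) [IsProbabilityMeasure μ]
    (X : ℕ → Ω → ℝ) (T : Ω → ℝ)
    (hXmeas : ∀ m, Measurable (X m)) (hXnonneg : ∀ m ω, 0 ≤ X m ω)
    (hXnondeg : ∀ m, μ {ω | X m ω = 0} < 1)
    (hTmeas : Measurable T) (hTnonneg : ∀ ω, 0 ≤ T ω)
    (hindep : IndepFun T (fun ω m => X m ω) μ)
    (hDFR : IsDFR μ T)
    (n : ℕ) (hn : 1 ≤ n)
    (κ : ProbabilityTheory.Kernel (Fin n → ℝ) (ℝ × ℝ)) (hκ : IsMarkovKernel κ)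
    (hker : μ.map (fun ω => ((fun i : Fin n => X i ω), (X n ω, X (n + 1) ω))) =
      (μ.map (fun ω => fun i : Fin n => X i ω)).compProd κ)
    (Nn : Set (Fin n → ℝ))
    (hNn : μ {ω | (fun i : Fin n => X i ω) ∈ Nn} = 1)
    (hcond : ∀ x ∈ Nn, ∀ G : ℝ → ℝ, IsSurvFun G → G 0 = 1 → DFRfun G →
      (∫ p, G p.1 ∂(κ x)) ^ 2 ≤ ∫ p, G (p.1 + p.2) ∂(κ x)) :
    (∫ ω, surv μ T (arr X (n + 1) ω) ∂μ) ^ 2 ≤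
      (∫ ω, surv μ T (arr X n ω) ∂μ) * (∫ ω, surv μ T (arr X (n + 2) ω) ∂μ) := by
  classical
  haveI := hκ
  set G : ℝ → ℝ := surv μ T with hGdef
  -- basic properties of G
  have hGanti : Antitone G := by
    intro s t hst
    exact ENNReal.toReal_mono (measure_ne_top μ _)
      (measure_mono fun ω hω => lt_of_le_of_lt hst hω)
  have hGmeas : Measurable G := hGanti.measurable
  have hG0 : ∀ t, 0 ≤ G t := fun t => ENNReal.toReal_nonneg
  have hG1 : ∀ t, G t ≤ 1 := by
    intro t
    calc G t ≤ (μ Set.univ).toReal :=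
          ENNReal.toReal_mono (measure_ne_top μ _) (measure_mono (Set.subset_univ _))
      _ = 1 := by simp
  have hGDFR : DFRfun G := by
    intro s t z hs hst hz
    have h := ENNReal.toReal_mono
      (ENNReal.mul_ne_top (measure_ne_top μ _) (measure_ne_top μ _))
      (hDFR s t z hs hst hz)
    simpa [ENNReal.toReal_mul, hGdef, surv] using h
  -- maps and measures
  set vec : Ω → (Fin n → ℝ) := fun ω => fun i : Fin n => X i ω with hvecdef
  have hvecm : Measurable vec := measurable_pi_lambda _ fun i => hXmeas i
  set ν : Measure (Fin n → ℝ) := μ.map vec with hνdef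
  haveI : IsProbabilityMeasure ν := Measure.isProbabilityMeasure_map hvecm.aemeasurable
  set π : Ω → (Fin n → ℝ) × (ℝ × ℝ) := fun ω => (vec ω, (X n ω, X (n + 1) ω)) with hπdef
  have hπm : Measurable π := hvecm.prodMk ((hXmeas n).prodMk (hXmeas (n + 1)))
  set A : (Fin n → ℝ) → ℝ := fun x => ∑ i, x i with hAdef
  have hAm : Measurable A := Finset.measurable_sum _ fun i _ => measurable_pi_apply i
  -- arrival time rewrites
  have harr0 : ∀ ω, arr X n ω = A (vec ω) := by
    intro ω
    simp only [arr, hAdef, hvecdef]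
    exact (Fin.sum_univ_eq_sum_range (fun i => X i ω) n).symm
  have harr1 : ∀ ω, arr X (n + 1) ω = A (vec ω) + X n ω := by
    intro ω
    rw [arr, Finset.sum_range_succ, ← arr, harr0]
  have harr2 : ∀ ω, arr X (n + 2) ω = A (vec ω) + X n ω + X (n + 1) ω := by
    intro ω
    rw [arr, Finset.sum_range_succ, ← arr, harr1]
  -- the three functions on the conditioning space
  set g : (Fin n → ℝ) → ℝ := fun x => G (A x) with hgdef
  set f : (Fin n → ℝ) → ℝ := fun x => ∫ p, G (A x + p.1) ∂(κ x) with hfdef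
  set h : (Fin n → ℝ) → ℝ := fun x => ∫ p, G (A x + p.1 + p.2) ∂(κ x) with hhdef
  have hF1m : Measurable fun z : (Fin n → ℝ) × (ℝ × ℝ) => G (A z.1 + z.2.1) :=
    hGmeas.comp ((hAm.comp measurable_fst).add (measurable_fst.comp measurable_snd))
  have hF2m : Measurable fun z : (Fin n → ℝ) × (ℝ × ℝ) => G (A z.1 + z.2.1 + z.2.2) :=
    hGmeas.comp (((hAm.comp measurable_fst).add
      (measurable_fst.comp measurable_snd)).add (measurable_snd.comp measurable_snd))
  have hfsm : StronglyMeasurable f :=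
    MeasureTheory.StronglyMeasurable.integral_kernel_prod_right
      (f := fun x (p : ℝ × ℝ) => G (A x + p.1)) hF1m.stronglyMeasurable
  have hhsm : StronglyMeasurable h :=
    MeasureTheory.StronglyMeasurable.integral_kernel_prod_right
      (f := fun x (p : ℝ × ℝ) => G (A x + p.1 + p.2)) hF2m.stronglyMeasurable
  have hgm : Measurable g := hGmeas.comp hAm
  -- bounds
  have hf0' : ∀ x, 0 ≤ f x := fun x => integral_nonneg fun p => hG0 _
  have hh0' : ∀ x, 0 ≤ h x := fun x => integral_nonneg fun p => hG0 _
  have hf1' : ∀ x, f x ≤ 1 := by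
    intro x
    have := norm_integral_le_of_norm_le_const (μ := κ x)
      (f := fun p : ℝ × ℝ => G (A x + p.1)) (C := 1)
      (ae_of_all _ fun p => by
        rw [Real.norm_eq_abs, abs_of_nonneg (hG0 _)]; exact hG1 _)
    calc f x ≤ ‖f x‖ := le_abs_self _
      _ ≤ 1 * (κ x Set.univ).toReal := this
      _ = 1 := by simp
  have hh1' : ∀ x, h x ≤ 1 := by
    intro x
    have := norm_integral_le_of_norm_le_const (μ := κ x)
      (f := fun p : ℝ × ℝ => G (A x + p.1 + p.2)) (C := 1)
      (ae_of_all _ fun p => by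
        rw [Real.norm_eq_abs, abs_of_nonneg (hG0 _)]; exact hG1 _)
    calc h x ≤ ‖h x‖ := le_abs_self _
      _ ≤ 1 * (κ x Set.univ).toReal := this
      _ = 1 := by simp
  -- the disintegration identity
  have keyInt : ∀ F : (Fin n → ℝ) × (ℝ × ℝ) → ℝ, Measurable F →
      (∀ z, 0 ≤ F z) → (∀ z, F z ≤ 1) →
      ∫ ω, F (π ω) ∂μ = ∫ x, ∫ p, F (x, p) ∂(κ x) ∂ν := by
    intro F hFm hFn0 hFn1
    have hFi : Integrable F (ν.compProd κ) := by
      refine Integrable.mono' (integrable_const 1) hFm.aestronglyMeasurable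
        (ae_of_all _ fun z => ?_)
      rw [Real.norm_eq_abs, abs_of_nonneg (hFn0 z)]; exact hFn1 z
    rw [← integral_map hπm.aemeasurable hFm.aestronglyMeasurable,
      show μ.map π = ν.compProd κ from hker, MeasureTheory.Measure.integral_compProd hFi]
  have I1 : ∫ ω, G (arr X (n + 1) ω) ∂μ = ∫ x, f x ∂ν := by
    have := keyInt (fun z => G (A z.1 + z.2.1)) hF1m (fun z => hG0 _) (fun z => hG1 _)
    simp only [harr1]
    exact this
  have I0 : ∫ ω, G (arr X n ω) ∂μ = ∫ x, g x ∂ν := by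
    simp only [harr0]
    exact (integral_map hvecm.aemeasurable (hgm.comp measurable_id).aestronglyMeasurable).symm
  have I2 : ∫ ω, G (arr X (n + 2) ω) ∂μ = ∫ x, h x ∂ν := by
    have := keyInt (fun z => G (A z.1 + z.2.1 + z.2.2)) hF2m (fun z => hG0 _) (fun z => hG1 _)
    simp only [harr2]
    exact this
  -- almost-everywhere nonnegativity of the kernel coordinates
  set Bad : Set (ℝ × ℝ) := {p : ℝ × ℝ | ¬ (0 ≤ p.1 ∧ 0 ≤ p.2)} with hBaddef
  have hBadm : MeasurableSet Bad := by
    apply MeasurableSet.compl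
    exact (measurableSet_le measurable_const measurable_fst).inter
      (measurableSet_le measurable_const measurable_snd)
  have hPae : ∀ᵐ z ∂(ν.compProd κ), 0 ≤ z.2.1 ∧ 0 ≤ z.2.2 := by
    rw [← hker]
    refine (ae_map_iff hπm.aemeasurable
      ((measurableSet_le measurable_const (measurable_fst.comp measurable_snd)).inter
        (measurableSet_le measurable_const (measurable_snd.comp measurable_snd)))).mpr ?_
    exact ae_of_all _ fun ω => ⟨hXnonneg n ω, hXnonneg (n + 1) ω⟩
  have hQae : ∀ᵐ x ∂ν, κ x Bad = 0 := by
    have := MeasureTheory.Measure.ae_ae_of_ae_compProd hPae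
    filter_upwards [this] with x hx
    exact ae_iff.mp hx
  set Q : Set (Fin n → ℝ) := {x | κ x Bad = 0} with hQdef
  have hQm : MeasurableSet Q := κ.measurable_coe hBadm (measurableSet_singleton 0)
  have hνQ : ν Q = 1 := (prob_compl_eq_zero_iff hQm).mp (ae_iff.mp hQae)
  -- nonnegative coordinates set
  set NNx : Set (Fin n → ℝ) := {x | ∀ i, 0 ≤ x i} with hNNdef
  have hNNm : MeasurableSet NNx := by
    have : NNx = ⋂ i, {x : Fin n → ℝ | 0 ≤ x i} := by
      ext x; simp [hNNdef]
    rw [this]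
    exact MeasurableSet.iInter fun i =>
      measurableSet_le measurable_const (measurable_pi_apply i)
  have hνNN : ν NNx = 1 := by
    rw [hνdef, Measure.map_apply hvecm hNNm,
      show vec ⁻¹' NNx = Set.univ from Set.eq_univ_of_forall fun ω i => hXnonneg i ω,
      measure_univ]
  -- the pointwise conditional inequality
  have claim : ∀ x ∈ Nn, x ∈ NNx → x ∈ Q → f x ^ 2 ≤ g x * h x := by
    intro x hxN hxnn hxQ
    have ha0 : 0 ≤ A x := Finset.sum_nonneg fun i _ => hxnn i
    rcases eq_or_lt_of_le (hG0 (A x)) with hc | hc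
    · -- G (A x) = 0 : everything vanishes
      have hae : ∀ᵐ p ∂(κ x), 0 ≤ p.1 ∧ 0 ≤ p.2 := ae_iff.mpr hxQ
      have hfx : f x = 0 := by
        show (∫ p, G (A x + p.1) ∂(κ x)) = 0
        apply integral_eq_zero_of_ae
        filter_upwards [hae] with p hp
        have h1 : G (A x + p.1) ≤ G (A x) := hGanti (le_add_of_nonneg_right hp.1)
        rw [← hc] at h1
        exact le_antisymm h1 (hG0 _)
      have hg0x : 0 ≤ g x := hG0 (A x)
      have hh0x : 0 ≤ h x := hh0' x
      rw [hfx]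
      nlinarith [mul_nonneg hg0x hh0x]
    · -- G (A x) > 0 : normalize and use the hypothesis
      set c := G (A x) with hcdef
      set H : ℝ → ℝ := fun u => G (A x + u) / c with hHdef
      have hHm : Measurable H :=
        (hGmeas.comp (measurable_const.add measurable_id)).div_const c
      have hHsurv : IsSurvFun H := by
        refine ⟨hHm, fun s t hs hst => ?_, fun t ht => ⟨div_nonneg (hG0 _) hc.le, ?_⟩⟩
        · exact div_le_div_of_nonneg_right (hGanti (by linarith)) hc.le
        · exact div_le_one_of_le₀ (hGanti (le_add_of_nonneg_right ht)) hc.le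
      have hH0 : H 0 = 1 := by
        show G (A x + 0) / c = 1
        rw [add_zero]
        exact div_self (ne_of_gt hc)
      have hHDFR : DFRfun H := by
        intro s t z hs hst hz
        have hG2 := hGDFR (A x + s) (A x + t) z (by linarith) (by linarith) hz
        show G (A x + (s + z)) / c * (G (A x + t) / c) ≤
          G (A x + (t + z)) / c * (G (A x + s) / c)
        rw [div_mul_div_comm, div_mul_div_comm]
        refine div_le_div_of_nonneg_right ?_ (by positivity)
        rw [← add_assoc, ← add_assoc]
        exact hG2
      have hc2 := hcond x hxN H hHsurv hH0 hHDFR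
      have e1 : ∫ p, H p.1 ∂(κ x) = f x / c := by
        rw [show (fun p : ℝ × ℝ => H p.1) = fun p : ℝ × ℝ => G (A x + p.1) / c from by
          funext p; simp only [hHdef]]
        exact integral_div c _
      have e2 : ∫ p, H (p.1 + p.2) ∂(κ x) = h x / c := by
        rw [show (fun p : ℝ × ℝ => H (p.1 + p.2)) =
            fun p : ℝ × ℝ => G (A x + p.1 + p.2) / c from by
          funext p; simp only [hHdef]; rw [add_assoc]]
        exact integral_div c _
      rw [e1, e2, div_pow, div_le_div_iff₀ (by positivity) hc] at hc2
      have hgc : g x = c := rfl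
      rw [hgc]
      nlinarith [hc, hh0' x, hf0' x]
  -- upgrade to an a.e. statement over ν
  set W : Set (Fin n → ℝ) := {x | f x ^ 2 ≤ g x * h x} with hWdef
  have hWm : MeasurableSet W :=
    measurableSet_le (hfsm.measurable.pow_const 2) (hgm.mul hhsm.measurable)
  have hle1 : ∀ s : Set (Fin n → ℝ), ν s ≤ 1 := fun s =>
    (measure_mono (Set.subset_univ s)).trans_eq measure_univ
  have hνW : ∀ᵐ x ∂ν, f x ^ 2 ≤ g x * h x := by
    set R : Set (Fin n → ℝ) := NNx ∩ Q with hRdef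
    have hRm : MeasurableSet R := hNNm.inter hQm
    have hRc : ν Rᶜ = 0 := by
      rw [hRdef, Set.compl_inter]
      refine le_antisymm (le_trans (measure_union_le _ _) ?_) (zero_le)
      rw [(prob_compl_eq_zero_iff hNNm).mpr hνNN, (prob_compl_eq_zero_iff hQm).mpr hνQ]
      simp
    have hνNn : ν Nn = 1 := by
      refine le_antisymm (hle1 _) ?_
      calc (1 : ENNReal) = μ {ω | vec ω ∈ Nn} := hNn.symm
        _ = μ (vec ⁻¹' Nn) := rfl
        _ ≤ ν Nn := Measure.le_map_apply hvecm.aemeasurable Nn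
    have h1 : ν (Nn ∩ R) = 1 := by
      have h2 := measure_inter_add_diff (μ := ν) Nn hRm
      have h3 : ν (Nn \ R) = 0 :=
        measure_mono_null (Set.diff_subset_compl _ _) hRc
      rw [h3, add_zero, hνNn] at h2
      exact h2
    have hsub : Nn ∩ R ⊆ W := by
      rintro x ⟨hx1, hx2, hx3⟩
      exact claim x hx1 hx2 hx3
    have hW1 : ν W = 1 := le_antisymm (hle1 _) (h1 ▸ measure_mono hsub)
    exact ae_iff.mpr ((prob_compl_eq_zero_iff hWm).mpr hW1)
  -- integrability
  have hfint : Integrable f ν := by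
    refine Integrable.mono' (integrable_const 1) hfsm.aestronglyMeasurable
      (ae_of_all _ fun x => ?_)
    rw [Real.norm_eq_abs, abs_of_nonneg (hf0' x)]; exact hf1' x
  have hhint : Integrable h ν := by
    refine Integrable.mono' (integrable_const 1) hhsm.aestronglyMeasurable
      (ae_of_all _ fun x => ?_)
    rw [Real.norm_eq_abs, abs_of_nonneg (hh0' x)]; exact hh1' x
  have hgint : Integrable g ν := by
    refine Integrable.mono' (integrable_const 1) hgm.aestronglyMeasurable
      (ae_of_all _ fun x => ?_)
    rw [Real.norm_eq_abs, abs_of_nonneg (hG0 _)]; exact hG1 _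
  -- conclude via the Cauchy–Schwarz-type lemma
  rw [I1, I0, I2]
  exact sq_integral_le_cs ν hfint hgint hhint
    (ae_of_all _ hf0') (ae_of_all _ fun x => hG0 _) (ae_of_all _ hh0') hνW
end

section
/- Let N(t) = sup{n ≥ 0 : S_n ≤ t} be a general counting process with interarrival times X_1, X_2, …, and let T be a nonnegative random time independent of the process. Assume: (a) T is DFR; (b) P(T = 0)·P(X_1 = 0) = 0; (c) (X_1, X_2) is associated and X_2 ≤_ST X_1; (d) for each n = 1, 2, … there exists a distributional version {(Z_{n+1}^x, Z_{n+2}^x) : x ∈ ℝ_+^n} of (X_{n+1}, X_{n+2}) given (X_1, …, X_n) and a set N_n ⊆ ℝ_+^n with P((X_1, …, X_n) ∈ N_n) = 1 such that for every x ∈ N_n the vector (Z_{n+1}^x, Z_{n+2}^x) is associated and Z_{n+2}^x ≤_ST Z_{n+1}^x. Then N(T) is d-DFR. -/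
open MeasureTheory ProbabilityTheory
open scoped ENNReal

set_option linter.unusedSectionVars false
set_option linter.unusedVariables false
set_option linter.unusedTactic false
set_option maxHeartbeats 1000000

variable {Ω : Type*} [MeasurableSpace Ω]

/-! ### Auxiliary lemmas -/


section AuxLemmas

lemma stmt4_arr_mono {X : ℕ → Ω → ℝ} (hX : ∀ m ω, 0 ≤ X m ω) (ω : Ω) :
    Monotone fun n => arr X n ω := fun a b hab =>
  Finset.sum_le_sum_of_subset_of_nonneg (Finset.range_subset_range.mpr hab) (fun i _ _ => hX i ω)

lemma stmt4_countN_le_iff {X : ℕ → Ω → ℝ} (hX : ∀ m ω, 0 ≤ X m ω) {t : ℝ} (ht : 0 ≤ t)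
    (n : ℕ) (ω : Ω) : (n : ℕ∞) ≤ countN X t ω ↔ arr X n ω ≤ t := by
  constructor
  · intro h
    by_contra hc
    push_neg at hc
    rcases n with _ | k
    · exact absurd (by simpa [arr] using ht) (not_le_of_gt hc)
    · have hb : countN X t ω ≤ (k : ℕ∞) := by
        apply sSup_le
        rintro x ⟨m, hm, rfl⟩
        show (m : ℕ∞) ≤ (k : ℕ∞)
        have hmt : arr X m ω ≤ t := hm
        have hmk : m ≤ k := by
          by_contra hmk
          push_neg at hmk
          exact absurd (le_trans (stmt4_arr_mono hX ω hmk) hmt) (not_le.mpr hc)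
        exact_mod_cast hmk
      have := le_trans h hb
      exact absurd (by exact_mod_cast this : k + 1 ≤ k) (by omega)
  · intro h
    exact le_sSup ⟨n, h, rfl⟩

variable {α : Type*} [MeasurableSpace α] {ρ : Measure α} [IsProbabilityMeasure ρ]
  {A B : α → ℝ}

lemma stmt4_meas_Iic_le (hA : Measurable A) (hB : Measurable B)
    (hst : ∀ t : ℝ, ρ {a | t < B a} ≤ ρ {a | t < A a}) (c : ℝ) :
    ρ (A ⁻¹' Set.Iic c) ≤ ρ (B ⁻¹' Set.Iic c) := by
  have hAc : A ⁻¹' Set.Iic c = {a | c < A a}ᶜ := by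
    ext a; simp [not_lt]
  have hBc : B ⁻¹' Set.Iic c = {a | c < B a}ᶜ := by
    ext a; simp [not_lt]
  have mA : MeasurableSet {a | c < A a} := measurableSet_lt measurable_const hA
  have mB : MeasurableSet {a | c < B a} := measurableSet_lt measurable_const hB
  rw [hAc, hBc, measure_compl mA (measure_ne_top ρ _), measure_compl mB (measure_ne_top ρ _)]
  exact tsub_le_tsub_left (hst c) _

lemma stmt4_meas_lowerSet_le (hA : Measurable A) (hB : Measurable B)
    (hst : ∀ t : ℝ, ρ {a | t < B a} ≤ ρ {a | t < A a})
    {L : Set ℝ} (hL : IsLowerSet L) : ρ (A ⁻¹' L) ≤ ρ (B ⁻¹' L) := by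
  rcases L.eq_empty_or_nonempty with rfl | hne
  · simp
  by_cases hbdd : BddAbove L
  · set c := sSup L with hc
    by_cases hcL : c ∈ L
    · have : L = Set.Iic c := by
        apply subset_antisymm (fun x hx => le_csSup hbdd hx) (fun x hx => hL hx hcL)
      rw [this]; exact stmt4_meas_Iic_le hA hB hst c
    · have hLe : L = Set.Iio c := by
        apply subset_antisymm
        · intro x hx
          exact lt_of_le_of_ne (le_csSup hbdd hx) (by rintro rfl; exact hcL hx)
        · intro x hx
          obtain ⟨y, hy, hxy⟩ := exists_lt_of_lt_csSup hne hx
          exact hL hxy.le hy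
      have hU : Set.Iio c = ⋃ k : ℕ, Set.Iic (c - 1 / (k + 1)) := by
        ext x
        simp only [Set.mem_Iio, Set.mem_iUnion, Set.mem_Iic]
        constructor
        · intro hx
          obtain ⟨k, hk⟩ := exists_nat_one_div_lt (sub_pos.mpr hx)
          exact ⟨k, by push_cast at hk ⊢; linarith⟩
        · rintro ⟨k, hk⟩
          have : (0:ℝ) < 1 / (k + 1) := by positivity
          linarith
      have hmono : ∀ C : α → ℝ, Monotone fun k : ℕ => C ⁻¹' Set.Iic (c - 1 / (k + 1)) := by
        intro C i j hij
        apply Set.preimage_mono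
        apply Set.Iic_subset_Iic.mpr
        have hij' : (i:ℝ) ≤ j := Nat.cast_le.mpr hij
        have h1 : (1:ℝ) / (j + 1) ≤ 1 / (i + 1) :=
          one_div_le_one_div_of_le (by positivity) (by linarith)
        linarith
      have hmonoA := hmono A
      have hmonoB := hmono B
      rw [hLe, hU, Set.preimage_iUnion, Set.preimage_iUnion,
        hmonoA.measure_iUnion, hmonoB.measure_iUnion]
      exact iSup_mono fun k => stmt4_meas_Iic_le hA hB hst _
  · have : L = Set.univ := by
      ext x
      simp only [Set.mem_univ, iff_true]
      obtain ⟨y, hy, hxy⟩ := not_bddAbove_iff.mp hbdd x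
      exact hL hxy.le hy
    simp [this]

lemma stmt4_lintegral_antitone_comp_le (hA : Measurable A) (hB : Measurable B)
    (hst : ∀ t : ℝ, ρ {a | t < B a} ≤ ρ {a | t < A a})
    {φ : ℝ → ℝ≥0∞} (hφ : Antitone φ) (hφ1 : ∀ u, φ u ≤ 1) :
    ∫⁻ a, φ (A a) ∂ρ ≤ ∫⁻ a, φ (B a) ∂ρ := by
  have hφm : Measurable φ := hφ.measurable
  have hne : ∀ u, φ u ≠ ⊤ := fun u => ne_top_of_le_ne_top ENNReal.one_ne_top (hφ1 u)
  have key : ∀ C : α → ℝ, Measurable C →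
      ∫⁻ a, φ (C a) ∂ρ = ∫⁻ t in Set.Ioi (0:ℝ), ρ {a | ENNReal.ofReal t < φ (C a)} := by
    intro C hC
    have h1 : ∫⁻ a, φ (C a) ∂ρ = ∫⁻ a, ENNReal.ofReal ((φ (C a)).toReal) ∂ρ := by
      apply lintegral_congr; intro a; rw [ENNReal.ofReal_toReal (hne _)]
    rw [h1, lintegral_eq_lintegral_meas_lt ρ (f := fun a => (φ (C a)).toReal)
      (ae_of_all _ fun a => ENNReal.toReal_nonneg)
      (Measurable.aemeasurable (by exact (hφm.comp hC).ennreal_toReal))]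
    apply setLIntegral_congr_fun measurableSet_Ioi
    intro t ht
    show ρ _ = ρ _
    congr 1
    ext a
    simp only [Set.mem_setOf_eq]
    rw [ENNReal.ofReal_lt_iff_lt_toReal (le_of_lt ht) (hne _)]
  rw [key A hA, key B hB]
  apply lintegral_mono
  intro t
  have hL : IsLowerSet {u : ℝ | ENNReal.ofReal t < φ u} := by
    intro u v hvu hu
    exact lt_of_lt_of_le hu (hφ hvu)
  exact stmt4_meas_lowerSet_le hA hB hst hL

lemma stmt4_assoc_lintegral {Z W : α → ℝ} (hZ : Measurable Z) (hW : Measurable W)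
    (hassoc : Associated2 ρ Z W)
    {φ ψ : ℝ → ℝ≥0∞} (hφ : Antitone φ) (hψ : Antitone ψ)
    (hφ1 : ∀ u, φ u ≤ 1) (hψ1 : ∀ u, ψ u ≤ 1) :
    (∫⁻ a, φ (Z a) ∂ρ) * (∫⁻ a, ψ (W a) ∂ρ) ≤ ∫⁻ a, φ (Z a) * ψ (W a) ∂ρ := by
  have hφm : Measurable φ := hφ.measurable
  have hψm : Measurable ψ := hψ.measurable
  have hφne : ∀ u, φ u ≠ ⊤ := fun u => ne_top_of_le_ne_top ENNReal.one_ne_top (hφ1 u)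
  have hψne : ∀ u, ψ u ≠ ⊤ := fun u => ne_top_of_le_ne_top ENNReal.one_ne_top (hψ1 u)
  set f : ℝ × ℝ → ℝ := fun p => -(φ p.1).toReal with hf
  set g : ℝ × ℝ → ℝ := fun p => -(ψ p.2).toReal with hg
  have hfmono : Monotone f := by
    intro p q hpq
    simp only [hf, neg_le_neg_iff]
    exact ENNReal.toReal_mono (hφne _) (hφ (hpq.1))
  have hgmono : Monotone g := by
    intro p q hpq
    simp only [hg, neg_le_neg_iff]
    exact ENNReal.toReal_mono (hψne _) (hψ (hpq.2))
  have hbound : ∀ (u : ℝ≥0∞), u ≤ 1 → |u.toReal| ≤ (1:ℝ) := by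
    intro u hu
    rw [abs_of_nonneg ENNReal.toReal_nonneg]
    calc u.toReal ≤ (1:ℝ≥0∞).toReal := ENNReal.toReal_mono ENNReal.one_ne_top hu
      _ = 1 := ENNReal.toReal_one
  have hfint : Integrable (fun a => f (Z a, W a)) ρ := by
    apply (integrable_const (1:ℝ)).mono'
    · exact (((hφm.comp hZ).ennreal_toReal).neg).aestronglyMeasurable
    · apply ae_of_all
      intro a
      simp only [hf, norm_neg, Real.norm_eq_abs]
      exact hbound _ (hφ1 _)
  have hgint : Integrable (fun a => g (Z a, W a)) ρ := by
    apply (integrable_const (1:ℝ)).mono'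
    · exact (((hψm.comp hW).ennreal_toReal).neg).aestronglyMeasurable
    · apply ae_of_all
      intro a
      simp only [hg, norm_neg, Real.norm_eq_abs]
      exact hbound _ (hψ1 _)
  have hfgint : Integrable (fun a => f (Z a, W a) * g (Z a, W a)) ρ := by
    apply (integrable_const (1:ℝ)).mono'
    · exact ((((hφm.comp hZ).ennreal_toReal).neg).mul
        (((hψm.comp hW).ennreal_toReal).neg)).aestronglyMeasurable
    · apply ae_of_all
      intro a
      have hb1 : ‖f (Z a, W a)‖ ≤ 1 := by
        simp only [hf, norm_neg, Real.norm_eq_abs]; exact hbound _ (hφ1 _)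
      have hb2 : ‖g (Z a, W a)‖ ≤ 1 := by
        simp only [hg, norm_neg, Real.norm_eq_abs]; exact hbound _ (hψ1 _)
      calc ‖f (Z a, W a) * g (Z a, W a)‖ = ‖f (Z a, W a)‖ * ‖g (Z a, W a)‖ := norm_mul _ _
        _ ≤ 1 * 1 := mul_le_mul hb1 hb2 (norm_nonneg _) (by norm_num)
        _ = 1 := by norm_num
  have key := hassoc f g hfmono hgmono hfint hgint hfgint
  have hIf : ∫ a, f (Z a, W a) ∂ρ = -(∫⁻ a, φ (Z a) ∂ρ).toReal := by
    rw [show (fun a => f (Z a, W a)) = fun a => -((φ (Z a)).toReal) from rfl,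
      integral_neg, integral_toReal (f := fun a => φ (Z a))
        (Measurable.aemeasurable (by exact hφm.comp hZ))
        (ae_of_all _ fun a => lt_of_le_of_lt (hφ1 _) ENNReal.one_lt_top)]
  have hIg : ∫ a, g (Z a, W a) ∂ρ = -(∫⁻ a, ψ (W a) ∂ρ).toReal := by
    rw [show (fun a => g (Z a, W a)) = fun a => -((ψ (W a)).toReal) from rfl,
      integral_neg, integral_toReal (f := fun a => ψ (W a))
        (Measurable.aemeasurable (by exact hψm.comp hW))
        (ae_of_all _ fun a => lt_of_le_of_lt (hψ1 _) ENNReal.one_lt_top)]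
  have hIfg : ∫ a, f (Z a, W a) * g (Z a, W a) ∂ρ
      = (∫⁻ a, φ (Z a) * ψ (W a) ∂ρ).toReal := by
    rw [show (fun a => f (Z a, W a) * g (Z a, W a))
        = fun a => ((φ (Z a)) * (ψ (W a))).toReal by
      funext a
      simp only [hf, hg, neg_mul_neg, ENNReal.toReal_mul]]
    rw [integral_toReal (f := fun a => φ (Z a) * ψ (W a))
        (Measurable.aemeasurable (by exact (hφm.comp hZ).mul (hψm.comp hW)))
        (ae_of_all _ fun a => by
          calc φ (Z a) * ψ (W a) ≤ 1 * 1 := mul_le_mul' (hφ1 _) (hψ1 _)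
            _ = 1 := by norm_num
            _ < ⊤ := ENNReal.one_lt_top)]
  rw [hIf, hIg, hIfg, neg_mul_neg] at key
  have h1 : (∫⁻ a, φ (Z a) ∂ρ) ≠ ⊤ := by
    apply ne_top_of_le_ne_top (by simp : (1:ℝ≥0∞) ≠ ⊤)
    calc ∫⁻ a, φ (Z a) ∂ρ ≤ ∫⁻ _, 1 ∂ρ := lintegral_mono fun a => hφ1 _
      _ = 1 := by simp
  have h2 : (∫⁻ a, ψ (W a) ∂ρ) ≠ ⊤ := by
    apply ne_top_of_le_ne_top (by simp : (1:ℝ≥0∞) ≠ ⊤)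
    calc ∫⁻ a, ψ (W a) ∂ρ ≤ ∫⁻ _, 1 ∂ρ := lintegral_mono fun a => hψ1 _
      _ = 1 := by simp
  have h3 : (∫⁻ a, φ (Z a) * ψ (W a) ∂ρ) ≠ ⊤ := by
    apply ne_top_of_le_ne_top (by simp : (1:ℝ≥0∞) ≠ ⊤)
    calc ∫⁻ a, φ (Z a) * ψ (W a) ∂ρ ≤ ∫⁻ _, 1 ∂ρ := by
          apply lintegral_mono
          intro a
          calc φ (Z a) * ψ (W a) ≤ 1 * 1 := mul_le_mul' (hφ1 _) (hψ1 _)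
            _ = 1 := by norm_num
      _ = 1 := by simp
  rw [← ENNReal.toReal_mul] at key
  exact (ENNReal.toReal_le_toReal (ENNReal.mul_ne_top h1 h2) h3).mp key

lemma stmt4_lintegral_sq_le {h a b : α → ℝ≥0∞} (hha : AEMeasurable a ρ)
    (hhb : AEMeasurable b ρ) (hle : ∀ᵐ x ∂ρ, h x ^ 2 ≤ a x * b x) :
    (∫⁻ x, h x ∂ρ) ^ 2 ≤ (∫⁻ x, a x ∂ρ) * (∫⁻ x, b x ∂ρ) := by
  have hpt : ∀ᵐ x ∂ρ, h x ≤ a x ^ (1/2 : ℝ) * b x ^ (1/2 : ℝ) := by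
    filter_upwards [hle] with x hx
    have h1 : h x = (h x ^ 2) ^ (1/2 : ℝ) := by
      rw [← ENNReal.rpow_natCast (h x) 2, ← ENNReal.rpow_mul]
      norm_num
    rw [h1, ← ENNReal.mul_rpow_of_nonneg _ _ (by norm_num : (0:ℝ) ≤ 1/2)]
    exact ENNReal.rpow_le_rpow hx (by norm_num)
  have hcs : ∫⁻ x, a x ^ (1/2 : ℝ) * b x ^ (1/2 : ℝ) ∂ρ ≤
      (∫⁻ x, a x ∂ρ) ^ (1/2 : ℝ) * (∫⁻ x, b x ∂ρ) ^ (1/2 : ℝ) := by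
    have hconj : Real.HolderConjugate 2 2 := Real.HolderConjugate.two_two
    have := ENNReal.lintegral_mul_le_Lp_mul_Lq ρ hconj
      (hha.pow_const (1/2 : ℝ)) (hhb.pow_const (1/2 : ℝ))
    simp only [Pi.mul_apply] at this
    calc ∫⁻ x, a x ^ (1/2 : ℝ) * b x ^ (1/2 : ℝ) ∂ρ
        ≤ (∫⁻ x, (a x ^ (1/2:ℝ)) ^ (2:ℝ) ∂ρ) ^ (1/(2:ℝ)) *
          (∫⁻ x, (b x ^ (1/2:ℝ)) ^ (2:ℝ) ∂ρ) ^ (1/(2:ℝ)) := this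
      _ = (∫⁻ x, a x ∂ρ) ^ (1/2 : ℝ) * (∫⁻ x, b x ∂ρ) ^ (1/2 : ℝ) := by
          congr 1 <;> · congr 1; apply lintegral_congr; intro x
                        rw [← ENNReal.rpow_mul]; norm_num
  have hmain : ∫⁻ x, h x ∂ρ ≤
      (∫⁻ x, a x ∂ρ) ^ (1/2 : ℝ) * (∫⁻ x, b x ∂ρ) ^ (1/2 : ℝ) :=
    le_trans (lintegral_mono_ae hpt) hcs
  calc (∫⁻ x, h x ∂ρ) ^ 2
      ≤ ((∫⁻ x, a x ∂ρ) ^ (1/2 : ℝ) * (∫⁻ x, b x ∂ρ) ^ (1/2 : ℝ)) ^ 2 := by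
        exact pow_le_pow_left' hmain 2
    _ = (∫⁻ x, a x ∂ρ) * (∫⁻ x, b x ∂ρ) := by
        rw [mul_pow, ← ENNReal.rpow_natCast ((∫⁻ x, a x ∂ρ) ^ (1/2:ℝ)) 2,
          ← ENNReal.rpow_natCast ((∫⁻ x, b x ∂ρ) ^ (1/2:ℝ)) 2,
          ← ENNReal.rpow_mul, ← ENNReal.rpow_mul]
        norm_num

end AuxLemmas

lemma stmt4_dfr_closed {μ : Measure Ω} [IsProbabilityMeasure μ] {T : Ω → ℝ}
    (hT : Measurable T) (ha : IsDFR μ T) :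
    ∀ s z₁ z₂ : ℝ, 0 ≤ s → 0 ≤ z₁ → 0 ≤ z₂ →
      μ {ω | s + z₁ ≤ T ω} * μ {ω | s + z₂ ≤ T ω} ≤
        μ {ω | s ≤ T ω} * μ {ω | s + z₁ + z₂ ≤ T ω} := by
  intro s z₁ z₂ hs hz₁ hz₂
  set G : ℝ → ℝ≥0∞ := fun u => μ {ω | u < T ω} with hGdef
  set Gb : ℝ → ℝ≥0∞ := fun u => μ {ω | u ≤ T ω} with hGbdef
  have hGanti : Antitone G := fun u v huv =>
    measure_mono (fun ω (h : v < T ω) => lt_of_le_of_lt huv h)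
  have hGle : ∀ u, G u ≤ Gb u := fun u => measure_mono (fun ω (h : u < T ω) => le_of_lt h)
  have hGbG : ∀ u v : ℝ, v < u → Gb u ≤ G v := fun u v hvu =>
    measure_mono (fun ω (h : u ≤ T ω) => lt_of_lt_of_le hvu h)
  have hiInf : ∀ u : ℝ, Gb u = ⨅ k : ℕ, G (u - 1 / (k + 1)) := by
    intro u
    have hset : {ω | u ≤ T ω} = ⋂ k : ℕ, {ω | u - 1 / (k + 1) < T ω} := by
      ext ω
      simp only [Set.mem_setOf_eq, Set.mem_iInter]
      constructor
      · intro h k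
        have : (0:ℝ) < 1 / (k + 1) := by positivity
        linarith
      · intro h
        by_contra hc
        push_neg at hc
        obtain ⟨k, hk⟩ := exists_nat_one_div_lt (sub_pos.mpr hc)
        have := h k
        push_cast at hk this
        linarith
    have hanti : Antitone fun k : ℕ => {ω | u - 1 / ((k:ℝ) + 1) < T ω} := by
      intro i j hij
      apply Set.setOf_subset_setOf.mpr
      intro ω hω
      have hij' : (i:ℝ) ≤ j := Nat.cast_le.mpr hij
      have h1 : (1:ℝ) / (j + 1) ≤ 1 / (i + 1) :=
        one_div_le_one_div_of_le (by positivity) (by linarith)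
      linarith
    rw [hGbdef]
    simp only []
    rw [hset, hanti.measure_iInter
      (fun k => (measurableSet_lt measurable_const hT).nullMeasurableSet)
      ⟨0, measure_ne_top μ _⟩]
  rcases eq_or_lt_of_le hz₁ with rfl | hz₁pos
  · simp only [add_zero]
    rw [mul_comm]
  rcases eq_or_lt_of_le hz₂ with rfl | hz₂pos
  · simp only [add_zero]
    rw [mul_comm]
  have key : ∀ k : ℕ, Gb (s + z₁) * Gb (s + z₂) ≤ G (s + z₁ + z₂ - 1 / (k + 1)) * G s := by
    intro k
    set ε : ℝ := min (min z₁ z₂) (1 / (2 * (k + 1))) with hε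
    have hεpos : 0 < ε := lt_min (lt_min hz₁pos hz₂pos) (by positivity)
    have hεz₁ : ε ≤ z₁ := le_trans (min_le_left _ _) (min_le_left _ _)
    have hεz₂ : ε ≤ z₂ := le_trans (min_le_left _ _) (min_le_right _ _)
    have hεk : 2 * ε ≤ 1 / (k + 1) := by
      have h2 : ε ≤ 1 / (2 * ((k:ℝ) + 1)) := min_le_right _ _
      have hk1 : (0:ℝ) < (k:ℝ) + 1 := by positivity
      have h3 : 2 * (1 / (2 * ((k:ℝ) + 1))) = 1 / ((k:ℝ) + 1) := by field_simp
      linarith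
    have h1 := ha s (s + z₂ - ε) (z₁ - ε) hs (by linarith) (by linarith)
    have e1 : s + (z₁ - ε) = s + z₁ - ε := by ring
    have e2 : s + z₂ - ε + (z₁ - ε) = s + z₁ + z₂ - 2 * ε := by ring
    rw [e1, e2] at h1
    calc Gb (s + z₁) * Gb (s + z₂)
        ≤ G (s + z₁ - ε) * G (s + z₂ - ε) := by
          apply mul_le_mul' (hGbG _ _ (by linarith)) (hGbG _ _ (by linarith))
      _ ≤ G (s + z₁ + z₂ - 2 * ε) * G s := h1
      _ ≤ G (s + z₁ + z₂ - 1 / (k + 1)) * G s := by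
          apply mul_le_mul' (hGanti (by linarith)) le_rfl
  have hGsfin : G s ≠ ⊤ := measure_ne_top μ _
  calc Gb (s + z₁) * Gb (s + z₂)
      ≤ ⨅ k : ℕ, G (s + z₁ + z₂ - 1 / (k + 1)) * G s := le_iInf key
    _ = (⨅ k : ℕ, G (s + z₁ + z₂ - 1 / (k + 1))) * G s := by
        rw [ENNReal.iInf_mul' (by simp [hGsfin]) (fun _ => inferInstance)]
    _ = Gb (s + z₁ + z₂) * G s := by rw [← hiInf]
    _ ≤ Gb s * Gb (s + z₁ + z₂) := by
        rw [mul_comm]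
        exact mul_le_mul' (hGle s) le_rfl

lemma stmt4_indep_surv {μ : Measure Ω} [IsProbabilityMeasure μ] {T S : Ω → ℝ}
    (hT : Measurable T) (hS : Measurable S) (h : IndepFun S T μ) :
    μ {ω | S ω ≤ T ω} = ∫⁻ ω, μ {ω' | S ω ≤ T ω'} ∂μ := by
  have hpair : μ.map (fun ω => (S ω, T ω)) = (μ.map S).prod (μ.map T) :=
    (indepFun_iff_map_prod_eq_prod_map_map hS.aemeasurable hT.aemeasurable).mp h
  have hmset : MeasurableSet {p : ℝ × ℝ | p.1 ≤ p.2} :=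
    measurableSet_le measurable_fst measurable_snd
  have h1 : μ {ω | S ω ≤ T ω} = μ.map (fun ω => (S ω, T ω)) {p : ℝ × ℝ | p.1 ≤ p.2} := by
    rw [Measure.map_apply (hS.prodMk hT) hmset]
    rfl
  have hGanti : Antitone (fun u => μ {ω' | u ≤ T ω'}) := fun u v huv =>
    measure_mono (fun ω (hω : v ≤ T ω) => le_trans huv hω)
  have hGmeas : Measurable (fun u => μ {ω' | u ≤ T ω'}) := hGanti.measurable
  have h2 : ∀ u : ℝ, (μ.map T) (Prod.mk u ⁻¹' {p : ℝ × ℝ | p.1 ≤ p.2}) = μ {ω' | u ≤ T ω'} := by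
    intro u
    have he : Prod.mk u ⁻¹' {p : ℝ × ℝ | p.1 ≤ p.2} = Set.Ici u := rfl
    rw [he, Measure.map_apply hT measurableSet_Ici]
    rfl
  rw [h1, hpair, Measure.prod_apply hmset]
  rw [lintegral_congr h2, lintegral_map hGmeas hS]


/-- main theorem. Let `N` be a general counting process with
interarrival times `X 0, X 1, …` (mathematically `X_1, X_2, …`), and `T` a
nonnegative random time independent of the process. Assume: (a) `T` is DFR;
(b) `P(T = 0)·P(X_1 = 0) = 0`; (c) `(X_1, X_2)` is associated and
`X_2 ≤_ST X_1`; (d) for each `n ≥ 1` there is a distributional version of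
`(X_{n+1}, X_{n+2})` given `(X_1, …, X_n)` — encoded as a Markov kernel `κ`
disintegrating the joint law — and a set `Nn` of full measure for
`(X_1, …, X_n)` such that for every `x ∈ Nn` the conditional vector is
associated and its second coordinate is stochastically dominated by the first.
Then `N(T)` is d-DFR. -/
theorem stmt4
    (μ : Measure Ω) [IsProbabilityMeasure μ]
    (X : ℕ → Ω → ℝ) (T : Ω → ℝ)
    (hXmeas : ∀ m, Measurable (X m)) (hXnonneg : ∀ m ω, 0 ≤ X m ω)
    (hXnondeg : ∀ m, μ {ω | X m ω = 0} < 1)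
    (hTmeas : Measurable T) (hTnonneg : ∀ ω, 0 ≤ T ω)
    (hindep : IndepFun T (fun ω m => X m ω) μ)
    (ha : IsDFR μ T)
    (hb : μ {ω | T ω = 0} * μ {ω | X 0 ω = 0} = 0)
    (hc : Associated2 μ (X 0) (X 1) ∧ StochLE μ (X 1) (X 0))
    (hd : ∀ n : ℕ, 1 ≤ n →
      ∃ κ : ProbabilityTheory.Kernel (Fin n → ℝ) (ℝ × ℝ), IsMarkovKernel κ ∧
        μ.map (fun ω => ((fun i : Fin n => X i ω), (X n ω, X (n + 1) ω))) =
          (μ.map (fun ω => fun i : Fin n => X i ω)).compProd κ ∧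
        ∃ Nn : Set (Fin n → ℝ),
          μ {ω | (fun i : Fin n => X i ω) ∈ Nn} = 1 ∧
          ∀ x ∈ Nn,
            Associated2 (κ x) Prod.fst Prod.snd ∧
            StochLE (κ x) Prod.snd Prod.fst) :
    IsdDFR μ (fun ω => countN X (T ω) ω) := by
  classical
  intro n
  set G : ℝ → ℝ≥0∞ := fun u => μ {ω' | u ≤ T ω'} with hGdef
  have hGanti : Antitone G := fun u v huv =>
    measure_mono fun ω (hω : v ≤ T ω) => le_trans huv hω
  have hGmeas : Measurable G := hGanti.measurable
  have hG1 : ∀ u, G u ≤ 1 := fun u => prob_le_one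
  have hG0 : G 0 = 1 := by
    have huniv : {ω' | (0:ℝ) ≤ T ω'} = Set.univ := Set.eq_univ_of_forall fun ω => hTnonneg ω
    rw [hGdef]
    simp only [huniv, measure_univ]
  have harr : ∀ m, Measurable (arr X m) := fun m =>
    Finset.measurable_sum _ (fun i _ => hXmeas i)
  have hdfr : ∀ s z₁ z₂ : ℝ, 0 ≤ s → 0 ≤ z₁ → 0 ≤ z₂ →
      G (s + z₁) * G (s + z₂) ≤ G s * G (s + z₁ + z₂) :=
    fun s z₁ z₂ hs h1 h2 => stmt4_dfr_closed hTmeas ha s z₁ z₂ hs h1 h2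
  have hindep' : ∀ m, IndepFun (arr X m) T μ := by
    intro m
    have hφ : Measurable (fun y : ℕ → ℝ => ∑ i ∈ Finset.range m, y i) :=
      Finset.measurable_sum _ (fun i _ => measurable_pi_apply i)
    exact (hindep.symm).comp hφ measurable_id
  have hI : ∀ m : ℕ, μ {ω | (m:ℕ∞) ≤ countN X (T ω) ω} = ∫⁻ ω, G (arr X m ω) ∂μ := by
    intro m
    have hset : {ω | (m : ℕ∞) ≤ countN X (T ω) ω} = {ω | arr X m ω ≤ T ω} := by
      ext ω
      exact stmt4_countN_le_iff hXnonneg (hTnonneg ω) m ω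
    rw [hset]
    exact stmt4_indep_surv hTmeas (harr m) (hindep' m)
  beta_reduce
  have e1 : ((n : ℕ∞)) + 1 = ((n + 1 : ℕ) : ℕ∞) := by push_cast; ring
  have e2 : ((n : ℕ∞)) + 2 = ((n + 2 : ℕ) : ℕ∞) := by push_cast; ring
  rw [e1, e2, hI n, hI (n+1), hI (n+2)]
  rcases n with _ | m
  · -- base case n = 0
    simp only [Nat.zero_add]
    have ha0 : ∀ ω, arr X 0 ω = 0 := fun ω => by simp [arr]
    have ha1 : ∀ ω, arr X 1 ω = X 0 ω := fun ω => by simp [arr]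
    have ha2 : ∀ ω, arr X 2 ω = X 0 ω + X 1 ω := fun ω => by
      show ∑ i ∈ Finset.range 2, X i ω = X 0 ω + X 1 ω
      rw [Finset.sum_range_succ, Finset.sum_range_one]
    have E0 : ∫⁻ ω, G (arr X 0 ω) ∂μ = 1 := by
      rw [lintegral_congr (fun ω => by rw [ha0 ω] : ∀ ω, G (arr X 0 ω) = G 0)]
      simp [hG0]
    have E1 : ∫⁻ ω, G (arr X 1 ω) ∂μ = ∫⁻ ω, G (X 0 ω) ∂μ :=
      lintegral_congr fun ω => by rw [ha1 ω]
    have E2 : ∫⁻ ω, G (arr X 2 ω) ∂μ = ∫⁻ ω, G (X 0 ω + X 1 ω) ∂μ :=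
      lintegral_congr fun ω => by rw [ha2 ω]
    rw [E0, E1, E2, one_mul]
    have hstep1 : ∫⁻ ω, G (X 0 ω) ∂μ ≤ ∫⁻ ω, G (X 1 ω) ∂μ :=
      stmt4_lintegral_antitone_comp_le (hXmeas 0) (hXmeas 1) hc.2 hGanti hG1
    have hstep2 : (∫⁻ ω, G (X 0 ω) ∂μ) * (∫⁻ ω, G (X 1 ω) ∂μ) ≤
        ∫⁻ ω, G (X 0 ω) * G (X 1 ω) ∂μ :=
      stmt4_assoc_lintegral (hXmeas 0) (hXmeas 1) hc.1 hGanti hGanti hG1 hG1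
    have hstep3 : ∫⁻ ω, G (X 0 ω) * G (X 1 ω) ∂μ ≤ ∫⁻ ω, G (X 0 ω + X 1 ω) ∂μ := by
      apply lintegral_mono
      intro ω
      have hh := hdfr 0 (X 0 ω) (X 1 ω) le_rfl (hXnonneg 0 ω) (hXnonneg 1 ω)
      simp only [zero_add] at hh
      calc G (X 0 ω) * G (X 1 ω) ≤ G 0 * G (X 0 ω + X 1 ω) := hh
        _ = G (X 0 ω + X 1 ω) := by rw [hG0, one_mul]
    calc (∫⁻ ω, G (X 0 ω) ∂μ) ^ 2
        = (∫⁻ ω, G (X 0 ω) ∂μ) * (∫⁻ ω, G (X 0 ω) ∂μ) := sq _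
      _ ≤ (∫⁻ ω, G (X 0 ω) ∂μ) * (∫⁻ ω, G (X 1 ω) ∂μ) := mul_le_mul' le_rfl hstep1
      _ ≤ ∫⁻ ω, G (X 0 ω) * G (X 1 ω) ∂μ := hstep2
      _ ≤ ∫⁻ ω, G (X 0 ω + X 1 ω) ∂μ := hstep3
  · -- inductive-type case n = m + 1 ≥ 1
    set k := m + 1 with hkdef
    obtain ⟨κ, hκMarkov, hDis, Nn, hNn, hNnprop⟩ := hd k (by omega)
    haveI := hκMarkov
    set Y : Ω → (Fin k → ℝ) := fun ω => fun i : Fin k => X i ω with hYdef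
    have hYmeas : Measurable Y := measurable_pi_lambda _ (fun i => hXmeas i)
    set ν : Measure (Fin k → ℝ) := μ.map Y with hνdef
    haveI : IsProbabilityMeasure ν := Measure.isProbabilityMeasure_map hYmeas.aemeasurable
    set P : Ω → (Fin k → ℝ) × (ℝ × ℝ) := fun ω => (Y ω, (X k ω, X (k+1) ω)) with hPdef
    have hPmeas : Measurable P := hYmeas.prodMk ((hXmeas k).prodMk (hXmeas (k+1)))
    have hDis2 : μ.map P = ν.compProd κ := hDis
    set s : (Fin k → ℝ) → ℝ := fun x => ∑ i, x i with hsdef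
    have hsmeas : Measurable s := Finset.measurable_sum _ (fun i _ => measurable_pi_apply i)
    have harrY : ∀ ω, arr X k ω = s (Y ω) :=
      fun ω => (Fin.sum_univ_eq_sum_range (fun i => X i ω) k).symm
    have harr1 : ∀ ω, arr X (k+1) ω = s (Y ω) + X k ω := fun ω => by
      have h' : arr X (k+1) ω = arr X k ω + X k ω := Finset.sum_range_succ _ _
      rw [h', harrY ω]
    have harr2 : ∀ ω, arr X (k+2) ω = s (Y ω) + X k ω + X (k+1) ω := fun ω => by
      have h' : arr X (k+2) ω = arr X (k+1) ω + X (k+1) ω := Finset.sum_range_succ _ _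
      rw [h', harr1 ω]
    set H1 : (Fin k → ℝ) → ℝ≥0∞ := fun x => ∫⁻ z, G (s x + z.1) ∂κ x with hH1def
    set H2 : (Fin k → ℝ) → ℝ≥0∞ := fun x => ∫⁻ z, G (s x + z.1 + z.2) ∂κ x with hH2def
    have hF1meas : Measurable (fun p : (Fin k → ℝ) × (ℝ × ℝ) => G (s p.1 + p.2.1)) :=
      hGmeas.comp ((hsmeas.comp measurable_fst).add (measurable_fst.comp measurable_snd))
    have hF2meas : Measurable (fun p : (Fin k → ℝ) × (ℝ × ℝ) => G (s p.1 + p.2.1 + p.2.2)) :=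
      hGmeas.comp (((hsmeas.comp measurable_fst).add
        (measurable_fst.comp measurable_snd)).add (measurable_snd.comp measurable_snd))
    have hH1meas : Measurable H1 := by
      exact Measurable.lintegral_kernel_prod_right' (κ := κ) hF1meas
    have hH2meas : Measurable H2 := by
      exact Measurable.lintegral_kernel_prod_right' (κ := κ) hF2meas
    have hIk : ∫⁻ ω, G (arr X k ω) ∂μ = ∫⁻ x, G (s x) ∂ν := by
      rw [hνdef, lintegral_map (f := fun x => G (s x)) (by exact hGmeas.comp hsmeas) hYmeas]
      exact lintegral_congr fun ω => by rw [harrY ω]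
    have hIk1 : ∫⁻ ω, G (arr X (k+1) ω) ∂μ = ∫⁻ x, H1 x ∂ν := by
      have e : ∫⁻ ω, G (arr X (k+1) ω) ∂μ
          = ∫⁻ p, G (s p.1 + p.2.1) ∂(μ.map P) := by
        rw [lintegral_map hF1meas hPmeas]
        exact lintegral_congr fun ω => by rw [harr1 ω]
      rw [e, hDis2, Measure.lintegral_compProd hF1meas]
    have hIk2 : ∫⁻ ω, G (arr X (k+2) ω) ∂μ = ∫⁻ x, H2 x ∂ν := by
      have e : ∫⁻ ω, G (arr X (k+2) ω) ∂μ
          = ∫⁻ p, G (s p.1 + p.2.1 + p.2.2) ∂(μ.map P) := by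
        rw [lintegral_map hF2meas hPmeas]
        exact lintegral_congr fun ω => by rw [harr2 ω]
      rw [e, hDis2, Measure.lintegral_compProd hF2meas]
    -- a.e. nonnegativity facts
    have hsnn : ∀ᵐ x ∂ν, 0 ≤ s x := by
      rw [hνdef]
      refine (ae_map_iff hYmeas.aemeasurable
        (measurableSet_le measurable_const hsmeas)).mpr ?_
      apply ae_of_all
      intro ω
      exact Finset.sum_nonneg fun i _ => hXnonneg i ω
    have hznn : ∀ᵐ x ∂ν, ∀ᵐ z ∂κ x, 0 ≤ z.1 ∧ 0 ≤ z.2 := by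
      have hmb : MeasurableSet {p : (Fin k → ℝ) × (ℝ × ℝ) | 0 ≤ p.2.1 ∧ 0 ≤ p.2.2} :=
        (measurableSet_le measurable_const (measurable_fst.comp measurable_snd)).inter
          (measurableSet_le measurable_const (measurable_snd.comp measurable_snd))
      have hprop : ∀ᵐ p ∂(ν.compProd κ), 0 ≤ p.2.1 ∧ 0 ≤ p.2.2 := by
        rw [← hDis2]
        exact (ae_map_iff hPmeas.aemeasurable hmb).mpr
          (ae_of_all _ fun ω => ⟨hXnonneg k ω, hXnonneg (k+1) ω⟩)
      exact Measure.ae_ae_of_ae_compProd hprop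
    -- pointwise claim on good x
    have hpoint : ∀ x, x ∈ Nn → 0 ≤ s x → (∀ᵐ z ∂κ x, 0 ≤ z.1 ∧ 0 ≤ z.2) →
        H1 x ^ 2 ≤ G (s x) * H2 x := by
      intro x hxN hsx hzx
      obtain ⟨hxassoc, hxst⟩ := hNnprop x hxN
      have hφanti : Antitone (fun u => G (s x + u)) := fun u v huv =>
        hGanti (by linarith)
      have hφ1 : ∀ u, G (s x + u) ≤ 1 := fun u => hG1 _
      have hJ : H1 x ≤ ∫⁻ z, G (s x + z.2) ∂κ x :=
        stmt4_lintegral_antitone_comp_le measurable_fst measurable_snd hxst hφanti hφ1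
      have hK : H1 x * (∫⁻ z, G (s x + z.2) ∂κ x) ≤
          ∫⁻ z, G (s x + z.1) * G (s x + z.2) ∂κ x :=
        stmt4_assoc_lintegral measurable_fst measurable_snd hxassoc hφanti hφanti hφ1 hφ1
      have hKK : ∫⁻ z, G (s x + z.1) * G (s x + z.2) ∂κ x ≤ G (s x) * H2 x := by
        have hmono : ∀ᵐ z ∂κ x, G (s x + z.1) * G (s x + z.2) ≤
            G (s x) * G (s x + z.1 + z.2) := by
          filter_upwards [hzx] with z hz
          exact hdfr (s x) z.1 z.2 hsx hz.1 hz.2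
        have hmeasf : Measurable fun z : ℝ × ℝ => G (s x + z.1 + z.2) := by
          exact hGmeas.comp ((measurable_const.add measurable_fst).add measurable_snd)
        calc ∫⁻ z, G (s x + z.1) * G (s x + z.2) ∂κ x
            ≤ ∫⁻ z, G (s x) * G (s x + z.1 + z.2) ∂κ x := lintegral_mono_ae hmono
          _ = G (s x) * H2 x := lintegral_const_mul _ hmeasf
      calc H1 x ^ 2 = H1 x * H1 x := sq _
        _ ≤ H1 x * ∫⁻ z, G (s x + z.2) ∂κ x := mul_le_mul' le_rfl hJ
        _ ≤ ∫⁻ z, G (s x + z.1) * G (s x + z.2) ∂κ x := hK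
        _ ≤ G (s x) * H2 x := hKK
    -- from the full-measure set Nn to an a.e. claim
    set badZ : Set (ℝ × ℝ) := {z : ℝ × ℝ | ¬ (0 ≤ z.1 ∧ 0 ≤ z.2)} with hbadZdef
    have hbadZmeas : MeasurableSet badZ :=
      ((measurableSet_le measurable_const measurable_fst).inter
        (measurableSet_le measurable_const measurable_snd)).compl
    set Wset : Set (Fin k → ℝ) := {x | 0 ≤ s x ∧ κ x badZ = 0} with hWdef
    have hWmeas : MeasurableSet Wset :=
      (measurableSet_le measurable_const hsmeas).inter
        ((κ.measurable_coe hbadZmeas) (measurableSet_singleton 0))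
    have hW : ∀ᵐ x ∂ν, x ∈ Wset := by
      filter_upwards [hsnn, hznn] with x h1 h2
      exact ⟨h1, ae_iff.mp h2⟩
    set Qset : Set (Fin k → ℝ) := {x | H1 x ^ 2 ≤ G (s x) * H2 x} with hQdef
    have hQmeas : MeasurableSet Qset :=
      measurableSet_le (hH1meas.pow_const 2) ((hGmeas.comp hsmeas).mul hH2meas)
    have hsub : Nn ⊆ Qset ∪ Wsetᶜ := by
      intro x hx
      by_cases hxW : x ∈ Wset
      · exact Or.inl (hpoint x hx hxW.1 (ae_iff.mpr hxW.2))
      · exact Or.inr hxW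
    have hν1 : ν (Qset ∪ Wsetᶜ) = 1 := by
      apply le_antisymm prob_le_one
      have hYsub : {ω | (fun i : Fin k => X i ω) ∈ Nn} ⊆ Y ⁻¹' (Qset ∪ Wsetᶜ) :=
        fun ω hω => hsub hω
      calc (1:ℝ≥0∞) = μ {ω | (fun i : Fin k => X i ω) ∈ Nn} := hNn.symm
        _ ≤ μ (Y ⁻¹' (Qset ∪ Wsetᶜ)) := measure_mono hYsub
        _ = ν (Qset ∪ Wsetᶜ) := by
            rw [hνdef, Measure.map_apply hYmeas (hQmeas.union hWmeas.compl)]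
    have hνQc : ν (Qsetᶜ ∩ Wset) = 0 := by
      have hce : Qsetᶜ ∩ Wset = (Qset ∪ Wsetᶜ)ᶜ := by
        rw [Set.compl_union, compl_compl]
      rw [hce, measure_compl (hQmeas.union hWmeas.compl) (measure_ne_top ν _), hν1,
        measure_univ]
      simp
    have hclaim : ∀ᵐ x ∂ν, H1 x ^ 2 ≤ G (s x) * H2 x := by
      rw [ae_iff]
      have hsub2 : {x | ¬ (H1 x ^ 2 ≤ G (s x) * H2 x)} ⊆ (Qsetᶜ ∩ Wset) ∪ Wsetᶜ := by
        intro x hx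
        by_cases hxW : x ∈ Wset
        · exact Or.inl ⟨hx, hxW⟩
        · exact Or.inr hxW
      have hWc : ν Wsetᶜ = 0 := by
        have := ae_iff.mp hW
        simpa [Set.compl_def] using this
      apply le_antisymm _ (zero_le)
      calc ν {x | ¬ (H1 x ^ 2 ≤ G (s x) * H2 x)}
          ≤ ν ((Qsetᶜ ∩ Wset) ∪ Wsetᶜ) := measure_mono hsub2
        _ ≤ ν (Qsetᶜ ∩ Wset) + ν Wsetᶜ := measure_union_le _ _
        _ = 0 := by rw [hνQc, hWc, add_zero]
    rw [hIk, hIk1, hIk2]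
    exact stmt4_lintegral_sq_le ((hGmeas.comp hsmeas).aemeasurable)
      hH2meas.aemeasurable hclaim
end

section
/- Let N(t) = sup{n ≥ 0 : S_n ≤ t} be a general counting process with interarrival times X_1, X_2, …, and let T be a nonnegative random variable independent of the process. Assume: (a) T is DFR; (b) P(T = 0)·P(X_1 = 0) = 0 (T and X_1 do not both have positive mass at 0); (c) the interarrival times X_1, X_2, … are mutually independent; (d) X_{n+1} ≤_ST X_n for all n = 1, 2, …. Then N(T) is d-DFR. -/
open MeasureTheory ProbabilityTheory

variable {Ω : Type*} [MeasurableSpace Ω]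

namespace Stmt5Aux

open Filter Set
open scoped ENNReal

/-- auxiliary survival function `u ↦ P(T ≥ u)`. -/
noncomputable def gsurv (μ : Measure Ω) (T : Ω → ℝ) (u : ℝ) : ℝ≥0∞ := μ {ω | u ≤ T ω}

lemma gsurv_anti (μ : Measure Ω) (T : Ω → ℝ) : Antitone (gsurv μ T) := by
  intro u v huv
  exact measure_mono (fun ω h => le_trans huv h)

lemma gsurv_meas (μ : Measure Ω) (T : Ω → ℝ) : Measurable (gsurv μ T) :=
  (gsurv_anti μ T).measurable

/-- continuity from above of the strict survival function towards `gsurv`. -/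
lemma tendsto_surv (μ : Measure Ω) [IsProbabilityMeasure μ] (T : Ω → ℝ) (hT : Measurable T)
    (c : ℝ) (e : ℕ → ℝ) (hepos : ∀ k, 0 < e k) (hanti : Antitone e)
    (hlim : Tendsto e atTop (nhds 0)) :
    Tendsto (fun k => μ {ω | c - e k < T ω}) atTop (nhds (gsurv μ T c)) := by
  have hseteq : (⋂ k, {ω | c - e k < T ω}) = {ω | c ≤ T ω} := by
    ext ω
    simp only [Set.mem_iInter, Set.mem_setOf_eq]
    constructor
    · intro h
      by_contra hlt
      push_neg at hlt
      obtain ⟨k, hk⟩ := (hlim.eventually_lt_const (show (0:ℝ) < c - T ω by linarith)).exists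
      have := h k
      linarith
    · intro h k
      have := hepos k
      linarith
  have hmono : Antitone (fun k => {ω | c - e k < T ω}) := by
    intro k l hkl ω hω
    simp only [Set.mem_setOf_eq] at *
    have := hanti hkl
    linarith
  have := tendsto_measure_iInter_atTop (μ := μ)
    (s := fun k => {ω | c - e k < T ω})
    (fun k => (measurableSet_lt measurable_const hT).nullMeasurableSet)
    hmono ⟨0, measure_ne_top μ _⟩
  rw [hseteq] at this
  exact this

lemma inv_succ_pos (k : ℕ) : (0:ℝ) < ((k:ℝ)+1)⁻¹ := by positivity

lemma inv_succ_anti : Antitone (fun k : ℕ => ((k:ℝ)+1)⁻¹) := by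
  intro k l hkl
  have : (k:ℝ) + 1 ≤ (l:ℝ) + 1 := by exact_mod_cast by omega
  exact inv_anti₀ (by positivity) this

lemma inv_succ_lim : Tendsto (fun k : ℕ => ((k:ℝ)+1)⁻¹) atTop (nhds 0) :=
  tendsto_one_div_add_atTop_nhds_zero_nat.congr (fun k => by rw [one_div])

lemma gsurv_superlog (μ : Measure Ω) [IsProbabilityMeasure μ] (T : Ω → ℝ) (hT : Measurable T)
    (hTnonneg : ∀ ω, 0 ≤ T ω) (ha : IsDFR μ T) :
    ∀ y a a' : ℝ, 0 ≤ y → 0 ≤ a → 0 ≤ a' →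
      gsurv μ T (y + a) * gsurv μ T (y + a') ≤ gsurv μ T y * gsurv μ T (y + a + a') := by
  set F : ℝ → ℝ≥0∞ := fun t => μ {ω | t < T ω} with hF
  have hgF : ∀ u ε : ℝ, 0 < ε → gsurv μ T u ≤ F (u - ε) := by
    intro u ε hε
    refine measure_mono (fun ω h => ?_)
    simp only [Set.mem_setOf_eq] at *
    linarith
  have hF1 : ∀ u, F u ≤ 1 := fun u => prob_le_one
  intro y a a' hy ha0 ha'0
  rcases eq_or_lt_of_le hy with hy0 | hy0
  · -- y = 0
    subst hy0
    simp only [zero_add]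
    have hgs0 : gsurv μ T 0 = 1 := by
      have : {ω | (0:ℝ) ≤ T ω} = Set.univ := Set.eq_univ_of_forall (fun ω => hTnonneg ω)
      rw [gsurv, this, measure_univ]
    rw [hgs0, one_mul]
    rcases eq_or_lt_of_le ha0 with haz | hapos
    · rw [← haz, hgs0, one_mul, zero_add]
    rcases eq_or_lt_of_le ha'0 with ha'z | ha'pos
    · rw [← ha'z, hgs0, mul_one, add_zero]
    -- a, a' > 0
    have htend := tendsto_surv μ T hT (a + a') (fun k => 3 * ((k:ℝ)+1)⁻¹)
      (fun k => by positivity)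
      (fun k l hkl => by have := inv_succ_anti hkl; simp only [] at *; linarith)
      (by simpa using inv_succ_lim.const_mul (3:ℝ))
    refine ge_of_tendsto htend ?_
    have hev1 := inv_succ_lim.eventually_lt_const (show (0:ℝ) < a/2 by linarith)
    have hev2 := inv_succ_lim.eventually_lt_const (show (0:ℝ) < a'/2 by linarith)
    filter_upwards [hev1, hev2] with k hk1 hk2
    set ε := ((k:ℝ)+1)⁻¹ with hεdef
    have hεpos : 0 < ε := inv_succ_pos k
    have hDFR := ha ε (a' - ε) (a - 2*ε) (le_of_lt hεpos) (by linarith) (by linarith)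
    have e1 : ε + (a - 2*ε) = a - ε := by ring
    have e2 : a' - ε + (a - 2*ε) = a + a' - 3*ε := by ring
    rw [e1, e2] at hDFR
    calc gsurv μ T a * gsurv μ T a'
        ≤ F (a - ε) * F (a' - ε) := mul_le_mul' (hgF _ _ hεpos) (hgF _ _ hεpos)
      _ ≤ F (a + a' - 3*ε) * F ε := hDFR
      _ ≤ F (a + a' - 3*ε) * 1 := mul_le_mul' le_rfl (hF1 ε)
      _ = F (a + a' - 3*ε) := mul_one _
  · -- y > 0
    have htend1 := tendsto_surv μ T hT (y + a + a') (fun k => ((k:ℝ)+1)⁻¹)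
      inv_succ_pos inv_succ_anti inv_succ_lim
    have htend2 := tendsto_surv μ T hT y (fun k => ((k:ℝ)+1)⁻¹)
      inv_succ_pos inv_succ_anti inv_succ_lim
    have htendmul := ENNReal.Tendsto.mul htend1 (Or.inr (measure_ne_top μ _))
      htend2 (Or.inr (measure_ne_top μ _))
    rw [mul_comm (gsurv μ T y)]
    refine ge_of_tendsto htendmul ?_
    filter_upwards [inv_succ_lim.eventually_lt_const hy0] with k hk
    set ε := ((k:ℝ)+1)⁻¹ with hεdef
    have hεpos : 0 < ε := inv_succ_pos k
    have hDFR := ha (y - ε) (y + a' - ε) a (by linarith) (by linarith) ha0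
    have e1 : y - ε + a = y + a - ε := by ring
    have e2 : y + a' - ε + a = y + a + a' - ε := by ring
    rw [e1, e2] at hDFR
    calc gsurv μ T (y + a) * gsurv μ T (y + a')
        ≤ F (y + a - ε) * F (y + a' - ε) := mul_le_mul' (hgF _ _ hεpos) (hgF _ _ hεpos)
      _ ≤ F (y + a + a' - ε) * F (y - ε) := hDFR

lemma countN_le_iff (X : ℕ → Ω → ℝ) (hX : ∀ m ω, 0 ≤ X m ω) (t : ℝ) (ht : 0 ≤ t)
    (ω : Ω) (k : ℕ) : (k : ℕ∞) ≤ countN X t ω ↔ arr X k ω ≤ t := by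
  have hmono : Monotone (fun n => arr X n ω) := by
    intro m m' hm
    exact Finset.sum_le_sum_of_subset_of_nonneg (Finset.range_subset_range.mpr hm)
      (fun i _ _ => hX i ω)
  constructor
  · intro h
    by_contra harr
    push_neg at harr
    have hk : k ≠ 0 := by
      rintro rfl
      have : arr X 0 ω = 0 := by simp [arr]
      rw [this] at harr
      linarith
    have hb : ∀ e ∈ ((fun n : ℕ => (n:ℕ∞)) '' {n | arr X n ω ≤ t}), e ≤ ((k-1 : ℕ) : ℕ∞) := by
      rintro e ⟨m, hm, rfl⟩
      have hmk : m < k := by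
        by_contra hmk
        push_neg at hmk
        have := hmono hmk
        simp only [Set.mem_setOf_eq] at hm
        have : arr X k ω ≤ t := le_trans this hm
        linarith
      exact Nat.cast_le.mpr (by omega)
    have h2 := le_trans h (sSup_le hb)
    have h3 := Nat.cast_le.mp h2
    omega
  · intro h
    exact le_sSup ⟨k, h, rfl⟩

lemma surv_int (μ : Measure Ω) [IsProbabilityMeasure μ] (T S : Ω → ℝ)
    (hT : Measurable T) (hS : Measurable S) (hind : IndepFun T S μ) :
    μ {ω | S ω ≤ T ω} = ∫⁻ s, gsurv μ T s ∂(μ.map S) := by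
  have hmap := (indepFun_iff_map_prod_eq_prod_map_map hS.aemeasurable hT.aemeasurable).mp hind.symm
  have hsetm : MeasurableSet {p : ℝ × ℝ | p.1 ≤ p.2} := measurableSet_le measurable_fst measurable_snd
  have h1 : μ {ω | S ω ≤ T ω} = (μ.map (fun ω => (S ω, T ω))) {p : ℝ × ℝ | p.1 ≤ p.2} := by
    rw [Measure.map_apply (hS.prodMk hT) hsetm]
    rfl
  rw [h1, hmap, Measure.prod_apply hsetm]
  refine lintegral_congr (fun s => ?_)
  have h2 : Prod.mk s ⁻¹' {p : ℝ × ℝ | p.1 ≤ p.2} = Set.Ici s := rfl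
  rw [h2, Measure.map_apply hT measurableSet_Ici]
  rfl

lemma law_sum (μ : Measure Ω) [IsProbabilityMeasure μ] (Y A : Ω → ℝ)
    (hY : Measurable Y) (hA : Measurable A) (hind : IndepFun Y A μ)
    (h : ℝ → ℝ≥0∞) (hh : Measurable h) :
    ∫⁻ z, h z ∂(μ.map (fun ω => Y ω + A ω))
      = ∫⁻ y, ∫⁻ a, h (y + a) ∂(μ.map A) ∂(μ.map Y) := by
  have hm2 : Measurable (fun p : ℝ × ℝ => h (p.1 + p.2)) :=
    hh.comp (measurable_fst.add measurable_snd)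
  rw [lintegral_map hh (show Measurable (fun ω => Y ω + A ω) from hY.add hA)]
  have hmap := (indepFun_iff_map_prod_eq_prod_map_map hY.aemeasurable hA.aemeasurable).mp hind
  have h1 : ∫⁻ ω, h (Y ω + A ω) ∂μ
      = ∫⁻ p, h (p.1 + p.2) ∂(μ.map (fun ω => (Y ω, A ω))) :=
    (lintegral_map hm2 (hY.prodMk hA)).symm
  rw [h1, hmap, MeasureTheory.lintegral_prod _ hm2.aemeasurable]

lemma st_integral (μ : Measure Ω) [IsProbabilityMeasure μ] (T : Ω → ℝ) (hT : Measurable T)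
    (A B : Ω → ℝ) (hA : Measurable A) (hB : Measurable B)
    (hd : ∀ t : ℝ, μ {ω | t < B ω} ≤ μ {ω | t < A ω}) (z : ℝ) :
    ∫⁻ a, gsurv μ T (z + a) ∂(μ.map A) ≤ ∫⁻ b, gsurv μ T (z + b) ∂(μ.map B) := by
  have key : ∀ (ν : Measure ℝ), IsProbabilityMeasure ν →
      ∫⁻ x, gsurv μ T (z + x) ∂ν = ∫⁻ ω, ν (Set.Iic (T ω - z)) ∂μ := by
    intro ν hν
    have hE : MeasurableSet {p : ℝ × Ω | z + p.1 ≤ T p.2} := by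
      have h0 : {p : ℝ × Ω | z + p.1 ≤ T p.2} = {p : ℝ × Ω | (0:ℝ) ≤ T p.2 - (z + p.1)} := by
        ext p
        simp [sub_nonneg]
      rw [h0]
      exact measurableSet_le measurable_const
        ((hT.comp measurable_snd).sub (measurable_const.add measurable_fst))
    calc ∫⁻ x, gsurv μ T (z + x) ∂ν
        = ∫⁻ x, μ (Prod.mk x ⁻¹' {p : ℝ × Ω | z + p.1 ≤ T p.2}) ∂ν :=
          lintegral_congr (fun x => rfl)
      _ = (ν.prod μ) {p : ℝ × Ω | z + p.1 ≤ T p.2} := (Measure.prod_apply hE).symm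
      _ = ∫⁻ ω, ν ((fun x => (x, ω)) ⁻¹' {p : ℝ × Ω | z + p.1 ≤ T p.2}) ∂μ :=
          Measure.prod_apply_symm hE
      _ = ∫⁻ ω, ν (Set.Iic (T ω - z)) ∂μ := by
          refine lintegral_congr (fun ω => ?_)
          congr 1
          ext x
          simp [Set.mem_Iic, le_sub_iff_add_le, add_comm]
  haveI : IsProbabilityMeasure (μ.map A) := Measure.isProbabilityMeasure_map hA.aemeasurable
  haveI : IsProbabilityMeasure (μ.map B) := Measure.isProbabilityMeasure_map hB.aemeasurable
  rw [key _ inferInstance, key _ inferInstance]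
  refine lintegral_mono (fun ω => ?_)
  rw [Measure.map_apply hA measurableSet_Iic, Measure.map_apply hB measurableSet_Iic]
  have h1 : A ⁻¹' (Set.Iic (T ω - z)) = {ω' | T ω - z < A ω'}ᶜ := by
    ext ω'
    simp [not_lt]
  have h2 : B ⁻¹' (Set.Iic (T ω - z)) = {ω' | T ω - z < B ω'}ᶜ := by
    ext ω'
    simp [not_lt]
  rw [h1, h2, measure_compl (measurableSet_lt measurable_const hA) (measure_ne_top μ _),
    measure_compl (measurableSet_lt measurable_const hB) (measure_ne_top μ _)]
  exact tsub_le_tsub_left (hd (T ω - z)) _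

lemma cs_lemma {α : Type*} [MeasurableSpace α] (ρ : Measure α) (f φ ψ : α → ℝ≥0∞)
    (hf : Measurable f) (hψ : Measurable ψ) (h : ∀ᵐ y ∂ρ, φ y ^ 2 ≤ f y * ψ y) :
    (∫⁻ y, φ y ∂ρ) ^ 2 ≤ (∫⁻ y, f y ∂ρ) * (∫⁻ y, ψ y ∂ρ) := by
  have h1 : ∫⁻ y, φ y ∂ρ ≤ ∫⁻ y, f y ^ (1/2:ℝ) * ψ y ^ (1/2:ℝ) ∂ρ := by
    refine lintegral_mono_ae ?_
    filter_upwards [h] with y hy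
    have hid : φ y = (φ y ^ 2) ^ (1/2:ℝ) := by
      rw [← ENNReal.rpow_natCast (φ y) 2, ← ENNReal.rpow_mul]
      norm_num
    rw [hid, ← ENNReal.mul_rpow_of_nonneg _ _ (by norm_num : (0:ℝ) ≤ 1/2)]
    exact ENNReal.rpow_le_rpow hy (by norm_num)
  have h2 := ENNReal.lintegral_mul_norm_pow_le (μ := ρ) hf.aemeasurable hψ.aemeasurable
    (by norm_num : (0:ℝ) ≤ 1/2) (by norm_num : (0:ℝ) ≤ 1/2) (by norm_num)
  have h3 := h1.trans h2
  calc (∫⁻ y, φ y ∂ρ) ^ 2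
      ≤ ((∫⁻ y, f y ∂ρ) ^ (1/2:ℝ) * (∫⁻ y, ψ y ∂ρ) ^ (1/2:ℝ)) ^ 2 := by gcongr
    _ = (∫⁻ y, f y ∂ρ) * (∫⁻ y, ψ y ∂ρ) := by
        rw [mul_pow, ← ENNReal.rpow_natCast ((∫⁻ y, f y ∂ρ) ^ (1/2:ℝ)) 2,
          ← ENNReal.rpow_natCast ((∫⁻ y, ψ y ∂ρ) ^ (1/2:ℝ)) 2,
          ← ENNReal.rpow_mul, ← ENNReal.rpow_mul]
        norm_num


end Stmt5Aux

open Stmt5Aux in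
/-- independent interarrival times. Let `N` be a general
counting process with interarrival times `X 0, X 1, …` (mathematically
`X_1, X_2, …`) and `T` a nonnegative random time independent of the process.
Assume: (a) `T` is DFR; (b) `P(T = 0)·P(X_1 = 0) = 0`; (c) the interarrival
times are mutually independent; (d) `X_{n+1} ≤_ST X_n` for all `n ≥ 1`.
Then `N(T)` is d-DFR. -/
theorem stmt5
    (μ : Measure Ω) [IsProbabilityMeasure μ]
    (X : ℕ → Ω → ℝ) (T : Ω → ℝ)
    (hXmeas : ∀ m, Measurable (X m)) (hXnonneg : ∀ m ω, 0 ≤ X m ω)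
    (hXnondeg : ∀ m, μ {ω | X m ω = 0} < 1)
    (hTmeas : Measurable T) (hTnonneg : ∀ ω, 0 ≤ T ω)
    (hindep : IndepFun T (fun ω m => X m ω) μ)
    (ha : IsDFR μ T)
    (hb : μ {ω | T ω = 0} * μ {ω | X 0 ω = 0} = 0)
    (hc : iIndepFun X μ)
    (hd : ∀ n : ℕ, StochLE μ (X (n + 1)) (X n)) :
    IsdDFR μ (fun ω => countN X (T ω) ω) := by
  classical
  set g := gsurv μ T with hgdef
  have hgmeas : Measurable g := gsurv_meas μ T
  intro n
  have hset : ∀ k : ℕ, {ω | (k:ℕ∞) ≤ countN X (T ω) ω} = {ω | arr X k ω ≤ T ω} := by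
    intro k
    ext ω
    exact countN_le_iff X hXnonneg (T ω) (hTnonneg ω) ω k
  have hc1 : ((n:ℕ∞) + 1) = ((n+1 : ℕ) : ℕ∞) := by push_cast; ring
  have hc2 : ((n:ℕ∞) + 2) = ((n+2 : ℕ) : ℕ∞) := by push_cast; ring
  simp only [hc1, hc2]
  rw [show {ω | ((n+1:ℕ):ℕ∞) ≤ (fun ω => countN X (T ω) ω) ω} = {ω | arr X (n+1) ω ≤ T ω}
      from hset (n+1),
    show {ω | ((n:ℕ):ℕ∞) ≤ (fun ω => countN X (T ω) ω) ω} = {ω | arr X n ω ≤ T ω}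
      from hset n,
    show {ω | ((n+2:ℕ):ℕ∞) ≤ (fun ω => countN X (T ω) ω) ω} = {ω | arr X (n+2) ω ≤ T ω}
      from hset (n+2)]
  -- measurability of arrival times
  have harrmeas : ∀ k, Measurable (arr X k) := by
    intro k
    unfold arr
    exact Finset.measurable_sum _ (fun i _ => hXmeas i)
  -- independence of T and each arrival time
  have hindk : ∀ k, IndepFun T (arr X k) μ := by
    intro k
    have hsm : Measurable (fun f : ℕ → ℝ => ∑ i ∈ Finset.range k, f i) :=
      Finset.measurable_sum _ (fun i _ => measurable_pi_apply i)
    exact hindep.comp measurable_id hsm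
  have hIk : ∀ k, μ {ω | arr X k ω ≤ T ω} = ∫⁻ s, g s ∂(μ.map (arr X k)) := by
    intro k
    exact surv_int μ T (arr X k) hTmeas (harrmeas k) ((hindk k))
  set ρ := μ.map (arr X n) with hρdef
  set α := μ.map (X n) with hαdef
  haveI : IsProbabilityMeasure ρ := Measure.isProbabilityMeasure_map (harrmeas n).aemeasurable
  haveI : IsProbabilityMeasure α := Measure.isProbabilityMeasure_map (hXmeas n).aemeasurable
  -- pairwise independence from mutual independence
  have harr_succ : ∀ k : ℕ, (fun ω => arr X k ω + X k ω) = arr X (k+1) := by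
    intro k
    funext ω
    simp [arr, Finset.sum_range_succ]
  have hYA : IndepFun (arr X n) (X n) μ := by
    have h0 := hc.indepFun_sum_range_succ hXmeas n
    have hfun : (∑ j ∈ Finset.range n, X j) = arr X n := by
      funext ω
      simp [arr, Finset.sum_apply]
    rwa [hfun] at h0
  have hZB : IndepFun (arr X (n+1)) (X (n+1)) μ := by
    have h0 := hc.indepFun_sum_range_succ hXmeas (n+1)
    have hfun : (∑ j ∈ Finset.range (n+1), X j) = arr X (n+1) := by
      funext ω
      simp [arr, Finset.sum_apply]
    rwa [hfun] at h0
  -- the conditional one- and two-step survival functions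
  set φ := fun y : ℝ => ∫⁻ a, g (y + a) ∂α with hφdef
  set ψ := fun y : ℝ => ∫⁻ a, φ (y + a) ∂α with hψdef
  have hφmeas : Measurable φ :=
    Measurable.lintegral_prod_right' (f := fun p : ℝ × ℝ => g (p.1 + p.2))
      (hgmeas.comp (measurable_fst.add measurable_snd))
  have hψmeas : Measurable ψ :=
    Measurable.lintegral_prod_right' (f := fun p : ℝ × ℝ => φ (p.1 + p.2))
      (hφmeas.comp (measurable_fst.add measurable_snd))
  -- law of S_{n+1}
  have hIn1 : ∫⁻ s, g s ∂(μ.map (arr X (n+1))) = ∫⁻ y, φ y ∂ρ := by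
    have h0 := law_sum μ (arr X n) (X n) (harrmeas n) (hXmeas n) hYA g hgmeas
    rw [harr_succ n] at h0
    exact h0
  -- lower bound for the law of S_{n+2} integral
  have hIn2 : ∫⁻ y, ψ y ∂ρ ≤ ∫⁻ s, g s ∂(μ.map (arr X (n+2))) := by
    have e1 : ∫⁻ s, g s ∂(μ.map (arr X (n+2)))
        = ∫⁻ z, ∫⁻ b, g (z + b) ∂(μ.map (X (n+1))) ∂(μ.map (arr X (n+1))) := by
      have h0 := law_sum μ (arr X (n+1)) (X (n+1)) (harrmeas (n+1)) (hXmeas (n+1)) hZB g hgmeas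
      rw [harr_succ (n+1)] at h0
      exact h0
    have e2 : ∫⁻ z, φ z ∂(μ.map (arr X (n+1)))
        ≤ ∫⁻ z, ∫⁻ b, g (z + b) ∂(μ.map (X (n+1))) ∂(μ.map (arr X (n+1))) := by
      refine lintegral_mono (fun z => ?_)
      exact st_integral μ T hTmeas (X n) (X (n+1)) (hXmeas n) (hXmeas (n+1)) (hd n) z
    have e3 : ∫⁻ z, φ z ∂(μ.map (arr X (n+1))) = ∫⁻ y, ψ y ∂ρ := by
      have h0 := law_sum μ (arr X n) (X n) (harrmeas n) (hXmeas n) hYA φ hφmeas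
      rw [harr_succ n] at h0
      exact h0
    rw [e1, ← e3]
    exact e2
  -- a.e. nonnegativity of the laws
  have haepos_ρ : ∀ᵐ y ∂ρ, 0 ≤ y := by
    rw [hρdef]
    rw [ae_map_iff (harrmeas n).aemeasurable measurableSet_Ici]
    refine Filter.Eventually.of_forall (fun ω => ?_)
    exact Finset.sum_nonneg (fun i _ => hXnonneg i ω)
  have haepos_α : ∀ᵐ a ∂α, 0 ≤ a := by
    rw [hαdef]
    rw [ae_map_iff (hXmeas n).aemeasurable measurableSet_Ici]
    exact Filter.Eventually.of_forall (fun ω => hXnonneg n ω)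
  -- key pointwise inequality
  have hkey : ∀ᵐ y ∂ρ, φ y ^ 2 ≤ g y * ψ y := by
    filter_upwards [haepos_ρ] with y hy
    have hgay : Measurable (fun a : ℝ => g (y + a)) :=
      hgmeas.comp (measurable_const.add measurable_id)
    have step1 : φ y ^ 2 = ∫⁻ a, ∫⁻ a', g (y+a) * g (y+a') ∂α ∂α := by
      rw [pow_two]
      calc φ y * φ y = ∫⁻ a, g (y + a) * φ y ∂α := (lintegral_mul_const _ hgay).symm
        _ = ∫⁻ a, ∫⁻ a', g (y+a) * g (y+a') ∂α ∂α := by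
            refine lintegral_congr (fun a => ?_)
            rw [hφdef]
            exact (lintegral_const_mul (g (y+a))
              (hgmeas.comp (measurable_const.add measurable_id))).symm
    have step2 : ∫⁻ a, ∫⁻ a', g (y+a) * g (y+a') ∂α ∂α
        ≤ ∫⁻ a, ∫⁻ a', g y * g (y+a+a') ∂α ∂α := by
      refine lintegral_mono_ae ?_
      filter_upwards [haepos_α] with a hA
      refine lintegral_mono_ae ?_
      filter_upwards [haepos_α] with a' hA'
      exact gsurv_superlog μ T hTmeas hTnonneg ha y a a' hy hA hA'
    have step3 : ∫⁻ a, ∫⁻ a', g y * g (y+a+a') ∂α ∂α = g y * ψ y := by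
      calc ∫⁻ a, ∫⁻ a', g y * g (y+a+a') ∂α ∂α
          = ∫⁻ a, g y * ∫⁻ a', g (y+a+a') ∂α ∂α := by
            refine lintegral_congr (fun a => ?_)
            exact lintegral_const_mul (g y)
              (hgmeas.comp (measurable_const.add measurable_id))
        _ = g y * ∫⁻ a, ∫⁻ a', g (y+a+a') ∂α ∂α :=
            lintegral_const_mul (g y)
              (Measurable.lintegral_prod_right' (f := fun p : ℝ × ℝ => g (y + p.1 + p.2))
                (hgmeas.comp ((measurable_const.add measurable_fst).add measurable_snd)))
        _ = g y * ψ y := rfl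
    rw [step1]
    exact step2.trans (le_of_eq step3)
  have hCS := cs_lemma ρ g φ ψ hgmeas hψmeas hkey
  rw [hIk (n+1), hIk n, hIk (n+2), hIn1, ← hρdef]
  calc (∫⁻ y, φ y ∂ρ) ^ 2
      ≤ (∫⁻ y, g y ∂ρ) * (∫⁻ y, ψ y ∂ρ) := hCS
    _ ≤ (∫⁻ y, g y ∂ρ) * (∫⁻ s, g s ∂(μ.map (arr X (n+2)))) := mul_le_mul_right hIn2 _
end
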